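/- arXiv:1801.00343 — 5 statements merged into one kernel-verified Lean document; each statement's English description precedes it below -/
import Mathlib

section
/- For every real number α > -1, the ideal I_α = {A ⊆ ℕ : ∑_{i ∈ A, i ≤ n} i^α = o(∑_{i ≤ n} i^α) as n → ∞} coincides with the ideal I_0 of natural density zero sets. -/
open Filter Topology Set MeasureTheory
open scoped ENNReal

noncomputable section

/-- An ideal on ℕ: contains all finite sets, closed under subsets and finite
unions, and does not contain ℕ itself. -/
def IsIdealOn (I : Set (Set ℕ)) : Prop :=
  (∀ ⦃A B : Set ℕ⦄, A ⊆ B → B ∈ I → A ∈ I) ∧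
  (∀ ⦃A B : Set ℕ⦄, A ∈ I → B ∈ I → A ∪ B ∈ I) ∧
  (∀ A : Set ℕ, A.Finite → A ∈ I) ∧
  (Set.univ : Set ℕ) ∉ I

/-- `l` is an `I`-cluster point of the sequence `x`. -/
def IdealClusterPt {X : Type*} [TopologicalSpace X] (I : Set (Set ℕ)) (x : ℕ → X) (l : X) : Prop :=
  ∀ U ∈ 𝓝 l, {n | x n ∈ U} ∉ I

/-- `l` is an `I`-limit point of the sequence `x`. -/
def IdealLimitPt {X : Type*} [TopologicalSpace X] (I : Set (Set ℕ)) (x : ℕ → X) (l : X) : Prop :=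
  ∃ k : ℕ → ℕ, StrictMono k ∧ Tendsto (x ∘ k) atTop (𝓝 l) ∧ Set.range k ∉ I

/-- Ordinary limit points of a sequence. -/
def limitPts {X : Type*} [TopologicalSpace X] (x : ℕ → X) : Set X :=
  {l | ∃ k : ℕ → ℕ, StrictMono k ∧ Tendsto (x ∘ k) atTop (𝓝 l)}

/-- The `i`-th digit (0-indexed; representing `d_{i+1}`) of the non-terminating
dyadic expansion of `ω ∈ (0,1]`. -/
def dyadicDigit (ω : ℝ) (i : ℕ) : ℤ :=
  ⌈(2:ℝ) ^ (i + 1) * ω⌉ - 2 * ⌈(2:ℝ) ^ i * ω⌉ + 1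

/-- The subsequence `x↾ω` of `x` keeping `x i` iff the dyadic digit of `ω` at `i` is `1`. -/
def subseq {X : Type*} (x : ℕ → X) (ω : ℝ) : ℕ → X :=
  fun k => x (Nat.nth (fun i => dyadicDigit ω i = 1) k)

open Classical in
/-- Characteristic-function embedding of `P(ℕ)` into Cantor space. -/
def chi (A : Set ℕ) : ℕ → Bool := fun n => if n ∈ A then true else false

def IsFsigma {α : Type*} [TopologicalSpace α] (s : Set α) : Prop :=
  ∃ F : ℕ → Set α, (∀ n, IsClosed (F n)) ∧ s = ⋃ n, F n

def IsFsigmaDelta {α : Type*} [TopologicalSpace α] (s : Set α) : Prop :=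
  ∃ F : ℕ → Set α, (∀ n, IsFsigma (F n)) ∧ s = ⋂ n, F n

/-- `I` is `F_σ`-separated from its dual filter. -/
def FsigmaSeparated (I : Set (Set ℕ)) : Prop :=
  ∃ A : Set (ℕ → Bool), IsFsigma A ∧ chi '' I ⊆ A ∧ A ∩ chi '' {S : Set ℕ | Sᶜ ∈ I} = ∅

/-- A submeasure on ℕ. -/
def IsSubmeasureOn (φ : Set ℕ → ℝ≥0∞) : Prop :=
  φ ∅ = 0 ∧ (∀ ⦃A B : Set ℕ⦄, A ⊆ B → φ A ≤ φ B) ∧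
    (∀ A B : Set ℕ, φ (A ∪ B) ≤ φ A + φ B) ∧ ∀ n : ℕ, φ {n} ≠ ⊤

/-- A partition of ℕ into nonempty finite sets. -/
def IsFinPartition (P : ℕ → Set ℕ) : Prop :=
  (∀ n, (P n).Finite ∧ (P n).Nonempty) ∧ (⋃ n, P n) = Set.univ ∧
    Pairwise (Function.onFun Disjoint P)

/-- The generalized density ideal determined by `(P n)` and `(μ n)`. -/
def Zmu (P : ℕ → Set ℕ) (μ : ℕ → Set ℕ → ℝ≥0∞) : Set (Set ℕ) :=
  {A | Tendsto (fun n => μ n (A ∩ P n)) atTop (𝓝 0)}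

def IsGenDensityIdeal (I : Set (Set ℕ)) : Prop :=
  ∃ (P : ℕ → Set ℕ) (μ : ℕ → Set ℕ → ℝ≥0∞), IsFinPartition P ∧
    (∀ n, IsSubmeasureOn (μ n)) ∧ (∀ n A, μ n A = μ n (A ∩ P n)) ∧
    Filter.limsup (fun n => μ n (P n)) atTop ≠ 0 ∧ I = Zmu P μ

/-- Exhaustive ideal of a submeasure. -/
def Exh (φ : Set ℕ → ℝ≥0∞) : Set (Set ℕ) :=
  {A | Tendsto (fun n => φ (A \ Set.Iio n)) atTop (𝓝 0)}

open Classical in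
/-- The ideal `I_α`. -/
def Ialpha (α : ℝ) : Set (Set ℕ) :=
  {A | (fun n => ∑ i ∈ Finset.Icc 1 n, if i ∈ A then (i:ℝ) ^ α else 0)
      =o[atTop] (fun n => ∑ i ∈ Finset.Icc 1 n, (i:ℝ) ^ α)}

open Classical in
/-- The ideal of natural density zero sets. -/
def densityZero : Set (Set ℕ) :=
  {A | Tendsto (fun n : ℕ => (∑ i ∈ Finset.range n, if i ∈ A then (1:ℝ) else 0) / n)
      atTop (𝓝 0)}

open Classical in
def phiEU (f : ℕ → ℝ) (A : Set ℕ) : ℝ :=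
  ⨆ n : ℕ, (∑ i ∈ Finset.Icc 1 n, if i ∈ A then f i else 0) / (∑ i ∈ Finset.Icc 1 n, f i)

def ExhReal (φ : Set ℕ → ℝ) : Set (Set ℕ) :=
  {A | Tendsto (fun n => φ (A \ Set.Iio n)) atTop (𝓝 0)}

def IsErdosUlamIdeal (I : Set (Set ℕ)) : Prop :=
  ∃ f : ℕ → ℝ, (∀ n, 0 < f n) ∧
    Tendsto (fun n => ∑ i ∈ Finset.Icc 1 n, f i) atTop atTop ∧
    (fun n => f n) =o[atTop] (fun n => ∑ i ∈ Finset.Icc 1 n, f i) ∧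
    I = ExhReal (phiEU f)

end
section IalphaProof

open Asymptotics Filter Finset
open scoped Classical

noncomputable section

namespace IalphaAux

/-- partial sum of `i^α` over `[1,n]`. -/
def T (α : ℝ) (n : ℕ) : ℝ := ∑ i ∈ Finset.Icc 1 n, (i:ℝ) ^ α

/-- partial sum of `i^α` over `A ∩ [1,n]`. -/
def S (A : Set ℕ) (α : ℝ) (n : ℕ) : ℝ :=
  ∑ i ∈ (Finset.Icc 1 n).filter (· ∈ A), (i:ℝ) ^ α

/-- counting function of `A`. -/
def cnt (A : Set ℕ) (n : ℕ) : ℕ := ((Finset.Icc 1 n).filter (· ∈ A)).card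

lemma S_nonneg (A : Set ℕ) (α : ℝ) (n : ℕ) : 0 ≤ S A α n :=
  Finset.sum_nonneg fun i _ => Real.rpow_nonneg (Nat.cast_nonneg i) α

lemma T_nonneg (α : ℝ) (n : ℕ) : 0 ≤ T α n :=
  Finset.sum_nonneg fun i _ => Real.rpow_nonneg (Nat.cast_nonneg i) α

/-- rearrangement: a sum of an antitone nonnegative function over a finite set of
positive integers is at most the sum over the initial segment of the same size. -/
lemma sum_le_sum_Icc_card (f : ℕ → ℝ) (h0 : ∀ i, 0 ≤ f i)
    (hmono : ∀ ⦃i j : ℕ⦄, 1 ≤ i → i ≤ j → f j ≤ f i) (B : Finset ℕ)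
    (hB : ∀ b ∈ B, 1 ≤ b) :
    ∑ b ∈ B, f b ≤ ∑ i ∈ Finset.Icc 1 B.card, f i := by
  induction B using Finset.strongInduction with
  | _ B ih =>
    rcases B.eq_empty_or_nonempty with rfl | hne
    · simp
    · set b := B.max' hne with hb
      have hbB : b ∈ B := B.max'_mem hne
      have hsub : B ⊆ Finset.Icc 1 b := fun x hx =>
        Finset.mem_Icc.mpr ⟨hB x hx, Finset.le_max' B x hx⟩
      have hcard : B.card ≤ b := by
        simpa [Nat.card_Icc] using Finset.card_le_card hsub
      have hc1 : 1 ≤ B.card := Finset.card_pos.mpr hne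
      obtain ⟨m, hm⟩ : ∃ m, B.card = m + 1 := ⟨B.card - 1, by omega⟩
      have hcarde : (B.erase b).card = m := by
        rw [Finset.card_erase_of_mem hbB, hm]; omega
      have herase := ih (B.erase b) (Finset.erase_ssubset hbB)
        (fun x hx => hB x (Finset.mem_of_mem_erase hx))
      calc ∑ x ∈ B, f x = ∑ x ∈ B.erase b, f x + f b := (Finset.sum_erase_add B f hbB).symm
        _ ≤ ∑ i ∈ Finset.Icc 1 m, f i + f b := by
            rw [← hcarde]; exact add_le_add herase le_rfl
        _ ≤ ∑ i ∈ Finset.Icc 1 m, f i + f (m + 1) := by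
            have : f b ≤ f (m + 1) := hmono (by omega) (by omega)
            linarith
        _ = ∑ i ∈ Finset.Icc 1 (m + 1), f i := (Finset.sum_Icc_succ_top (by omega) f).symm
        _ = ∑ i ∈ Finset.Icc 1 B.card, f i := by rw [hm]

lemma T_zero (n : ℕ) : T 0 n = n := by
  simp [T, Real.rpow_zero, Nat.card_Icc]

lemma T_upper_pos {α : ℝ} (hα0 : 0 ≤ α) (n : ℕ) : T α n ≤ (n:ℝ) ^ (α + 1) := by
  have h1 : T α n ≤ (n:ℝ) * (n:ℝ) ^ α := by
    calc T α n ≤ ∑ _i ∈ Finset.Icc 1 n, (n:ℝ) ^ α := by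
          refine Finset.sum_le_sum fun i hi => ?_
          have hi' := (Finset.mem_Icc.mp hi).2
          exact Real.rpow_le_rpow (Nat.cast_nonneg i) (by exact_mod_cast hi') hα0
      _ = (n:ℝ) * (n:ℝ) ^ α := by
          rw [Finset.sum_const, Nat.card_Icc]
          simp [nsmul_eq_mul]
  rwa [add_comm, Real.rpow_one_add' (Nat.cast_nonneg n) (by intro h; linarith)]

lemma T_lower_neg {α : ℝ} (hα : -1 < α) (hα0 : α ≤ 0) (n : ℕ) :
    (n:ℝ) ^ (α + 1) ≤ T α n := by
  rcases Nat.eq_zero_or_pos n with rfl | hn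
  · simp [T, Real.zero_rpow (by linarith : α + 1 ≠ 0)]
  have h1 : (n:ℝ) * (n:ℝ) ^ α ≤ T α n := by
    calc (n:ℝ) * (n:ℝ) ^ α = ∑ _i ∈ Finset.Icc 1 n, (n:ℝ) ^ α := by
          rw [Finset.sum_const, Nat.card_Icc]; simp [nsmul_eq_mul]
      _ ≤ T α n := by
          refine Finset.sum_le_sum fun i hi => ?_
          obtain ⟨hi1, hi2⟩ := Finset.mem_Icc.mp hi
          exact Real.rpow_le_rpow_of_nonpos (by exact_mod_cast hi1) (by exact_mod_cast hi2) hα0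
  rwa [add_comm, Real.rpow_one_add' (Nat.cast_nonneg n) (by intro h; linarith [(by linarith : (0:ℝ) < 1 + α)] )]

lemma T_upper_neg {α : ℝ} (hα : -1 < α) (hα0 : α ≤ 0) (m : ℕ) :
    T α m ≤ (m:ℝ) ^ (α + 1) / (α + 1) := by
  have hp : 0 < α + 1 := by linarith
  induction m with
  | zero => simp [T, Real.zero_rpow hp.ne']
  | succ m ih =>
    have hm1 : (0:ℝ) < (m:ℝ) + 1 := by positivity
    have key : (α + 1) * ((m:ℝ) + 1) ^ α ≤ ((m:ℝ) + 1) ^ (α + 1) - (m:ℝ) ^ (α + 1) := by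
      have hs : -1 ≤ -(1 / ((m:ℝ) + 1)) := by
        rw [neg_le_neg_iff]
        rw [div_le_one hm1]; linarith [Nat.cast_nonneg (α := ℝ) m]
      have hber := rpow_one_add_le_one_add_mul_self hs hp.le (by linarith : α + 1 ≤ 1)
      have h1s : 1 + -(1 / ((m:ℝ) + 1)) = (m:ℝ) / ((m:ℝ) + 1) := by field_simp; ring
      rw [h1s] at hber
      -- multiply by ((m:ℝ)+1)^(α+1)
      have hpow : (0:ℝ) < ((m:ℝ) + 1) ^ (α + 1) := Real.rpow_pos_of_pos hm1 _
      have hmul := mul_le_mul_of_nonneg_right hber hpow.le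
      have hlhs : ((m:ℝ) / ((m:ℝ) + 1)) ^ (α + 1) * ((m:ℝ) + 1) ^ (α + 1) = (m:ℝ) ^ (α + 1) := by
        rw [← Real.mul_rpow (by positivity) hm1.le]
        congr 1
        field_simp
      have hpm : ((m:ℝ) + 1) ^ α = ((m:ℝ) + 1) ^ (α + 1) / ((m:ℝ) + 1) := by
        rw [← Real.rpow_sub_one hm1.ne']; ring_nf
      rw [hlhs] at hmul
      rw [hpm]
      have : (1 + (α + 1) * -(1 / ((m:ℝ) + 1))) * ((m:ℝ) + 1) ^ (α + 1)
          = ((m:ℝ) + 1) ^ (α + 1) - (α + 1) * (((m:ℝ) + 1) ^ (α + 1) / ((m:ℝ) + 1)) := by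
        field_simp; ring
      rw [this] at hmul
      linarith
    have hstep : ((m:ℝ) + 1) ^ α ≤ (((m:ℝ) + 1) ^ (α + 1) - (m:ℝ) ^ (α + 1)) / (α + 1) := by
      rw [le_div_iff₀ hp]; linarith
    have hsum : T α (m + 1) = T α m + ((m:ℝ) + 1) ^ α := by
      unfold T
      rw [Finset.sum_Icc_succ_top (a := 1) (b := m) (by omega)]
      push_cast; ring_nf
    rw [hsum]
    have hr : (m:ℝ) ^ (α + 1) / (α + 1) + (((m:ℝ) + 1) ^ (α + 1) - (m:ℝ) ^ (α + 1)) / (α + 1)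
        = ((m:ℝ) + 1) ^ (α + 1) / (α + 1) := by ring
    have hcast : ((m + 1 : ℕ) : ℝ) = (m:ℝ) + 1 := by push_cast; ring
    rw [hcast]
    linarith

lemma T_lower_pos {α : ℝ} (hα0 : 0 ≤ α) (n : ℕ) :
    ((n:ℝ) / 2) ^ (α + 1) ≤ T α n := by
  rcases Nat.eq_zero_or_pos n with rfl | hn
  · simp [T, Real.zero_rpow (by linarith : α + 1 ≠ 0)]
  have hsub : Finset.Icc (n / 2 + 1) n ⊆ Finset.Icc 1 n := by
    intro x hx; obtain ⟨h1, h2⟩ := Finset.mem_Icc.mp hx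
    exact Finset.mem_Icc.mpr ⟨by omega, h2⟩
  have h1 : ∑ i ∈ Finset.Icc (n / 2 + 1) n, (i:ℝ) ^ α ≤ T α n := by
    exact Finset.sum_le_sum_of_subset_of_nonneg hsub
      (fun i _ _ => Real.rpow_nonneg (Nat.cast_nonneg i) α)
  have h2 : ((n:ℝ) / 2) * ((n:ℝ) / 2) ^ α ≤ ∑ i ∈ Finset.Icc (n / 2 + 1) n, (i:ℝ) ^ α := by
    have hcard : (Finset.Icc (n / 2 + 1) n).card = n - n / 2 := by
      rw [Nat.card_Icc]; omega
    calc ((n:ℝ) / 2) * ((n:ℝ) / 2) ^ α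
        ≤ ((n - n / 2 : ℕ) : ℝ) * ((n:ℝ) / 2) ^ α := by
          have : (n:ℝ) / 2 ≤ ((n - n / 2 : ℕ) : ℝ) := by
            have : n ≤ 2 * (n - n / 2) := by omega
            have := (Nat.cast_le (α := ℝ)).mpr this
            push_cast at this ⊢; linarith
          exact mul_le_mul_of_nonneg_right this (Real.rpow_nonneg (by positivity) α)
      _ = ∑ _i ∈ Finset.Icc (n / 2 + 1) n, ((n:ℝ) / 2) ^ α := by
          rw [Finset.sum_const, hcard]; simp [nsmul_eq_mul]
      _ ≤ ∑ i ∈ Finset.Icc (n / 2 + 1) n, (i:ℝ) ^ α := by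
          refine Finset.sum_le_sum fun i hi => ?_
          obtain ⟨hi1, _⟩ := Finset.mem_Icc.mp hi
          have : (n:ℝ) / 2 ≤ (i:ℝ) := by
            have : n ≤ 2 * i := by omega
            have := (Nat.cast_le (α := ℝ)).mpr this
            push_cast at this ⊢; linarith
          exact Real.rpow_le_rpow (by positivity) this hα0
  calc ((n:ℝ) / 2) ^ (α + 1) = ((n:ℝ) / 2) * ((n:ℝ) / 2) ^ α := by
        rw [add_comm, Real.rpow_one_add' (by positivity) (by intro h; linarith)]
    _ ≤ T α n := le_trans h2 h1


lemma cnt_mem_one_le {A : Set ℕ} {n i : ℕ} (hi : i ∈ (Finset.Icc 1 n).filter (· ∈ A)) :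
    1 ≤ i ∧ i ≤ n := by
  have := (Finset.mem_filter.mp hi).1
  exact Finset.mem_Icc.mp this

lemma T_isBigO {α : ℝ} (hα : -1 < α) :
    (fun n : ℕ => T α n) =O[atTop] fun n : ℕ => (n:ℝ) ^ (α + 1) := by
  rcases le_or_gt 0 α with h | h
  · refine Asymptotics.IsBigO.of_bound 1 ?_
    filter_upwards with n
    rw [Real.norm_eq_abs, Real.norm_eq_abs, abs_of_nonneg (T_nonneg α n),
      abs_of_nonneg (Real.rpow_nonneg (Nat.cast_nonneg n) _), one_mul]
    exact T_upper_pos h n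
  · refine Asymptotics.IsBigO.of_bound (1 / (α + 1)) ?_
    filter_upwards with n
    rw [Real.norm_eq_abs, Real.norm_eq_abs, abs_of_nonneg (T_nonneg α n),
      abs_of_nonneg (Real.rpow_nonneg (Nat.cast_nonneg n) _)]
    have := T_upper_neg hα h.le n
    rw [div_eq_mul_inv, mul_comm] at this
    rw [one_div, mul_comm ((α+1)⁻¹)] at *
    linarith
  
lemma rpow_isBigO_T {α : ℝ} (hα : -1 < α) :
    (fun n : ℕ => (n:ℝ) ^ (α + 1)) =O[atTop] fun n : ℕ => T α n := by
  rcases le_or_gt 0 α with h | h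
  · refine Asymptotics.IsBigO.of_bound ((2:ℝ) ^ (α + 1)) ?_
    filter_upwards with n
    rw [Real.norm_eq_abs, Real.norm_eq_abs, abs_of_nonneg (T_nonneg α n),
      abs_of_nonneg (Real.rpow_nonneg (Nat.cast_nonneg n) _)]
    have h1 := T_lower_pos h n
    have h2 : ((n:ℝ) / 2) ^ (α + 1) = (n:ℝ) ^ (α + 1) / (2:ℝ) ^ (α + 1) :=
      Real.div_rpow (Nat.cast_nonneg n) (by norm_num) _
    have h3 : (0:ℝ) < (2:ℝ) ^ (α + 1) := Real.rpow_pos_of_pos (by norm_num) _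
    rw [h2, div_le_iff₀ h3] at h1
    linarith [h1]
  · refine Asymptotics.IsBigO.of_bound 1 ?_
    filter_upwards with n
    rw [Real.norm_eq_abs, Real.norm_eq_abs, abs_of_nonneg (T_nonneg α n),
      abs_of_nonneg (Real.rpow_nonneg (Nat.cast_nonneg n) _), one_mul]
    exact T_lower_neg hα h.le n

lemma mem_Ialpha_iff {α : ℝ} {A : Set ℕ} :
    A ∈ Ialpha α ↔ (fun n => S A α n) =o[atTop] fun n => T α n := by
  simp only [Ialpha, Set.mem_setOf_eq, S, T]
  constructor
  · intro h; exact h.congr (fun n => (Finset.sum_filter _ _).symm) (fun n => rfl)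
  · intro h; exact h.congr (fun n => Finset.sum_filter _ _) (fun n => rfl)

lemma step_a_pos {α : ℝ} {A : Set ℕ} (hpos : 0 ≤ α)
    (h : (fun n => (cnt A n : ℝ)) =o[atTop] fun n : ℕ => (n:ℝ)) :
    (fun n => S A α n) =o[atTop] fun n : ℕ => (n:ℝ) ^ (α + 1) := by
  have h1 : (fun n => S A α n) =O[atTop] fun n => (cnt A n : ℝ) * (n:ℝ) ^ α := by
    refine Asymptotics.IsBigO.of_bound 1 ?_
    filter_upwards with n
    rw [Real.norm_eq_abs, Real.norm_eq_abs, abs_of_nonneg (S_nonneg A α n), one_mul,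
      abs_of_nonneg (by positivity : (0:ℝ) ≤ (cnt A n : ℝ) * (n:ℝ) ^ α)]
    unfold S cnt
    calc ∑ i ∈ (Finset.Icc 1 n).filter (· ∈ A), (i:ℝ) ^ α
        ≤ ∑ _i ∈ (Finset.Icc 1 n).filter (· ∈ A), (n:ℝ) ^ α := by
          refine Finset.sum_le_sum fun i hi => ?_
          obtain ⟨_, hi2⟩ := cnt_mem_one_le hi
          exact Real.rpow_le_rpow (Nat.cast_nonneg i) (by exact_mod_cast hi2) hpos
      _ = (((Finset.Icc 1 n).filter (· ∈ A)).card : ℝ) * (n:ℝ) ^ α := by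
          rw [Finset.sum_const]; simp [nsmul_eq_mul]
  have h2 : (fun n => (cnt A n : ℝ) * (n:ℝ) ^ α) =o[atTop]
      fun n : ℕ => (n:ℝ) * (n:ℝ) ^ α :=
    h.mul_isBigO (Asymptotics.isBigO_refl _ _)
  refine (h1.trans_isLittleO h2).congr (fun n => rfl) (fun n => ?_)
  rw [add_comm, Real.rpow_one_add' (Nat.cast_nonneg n) (by intro hh; linarith)]

lemma step_a_neg {α : ℝ} {A : Set ℕ} (hα : -1 < α) (hneg : α ≤ 0)
    (h : (fun n => (cnt A n : ℝ)) =o[atTop] fun n : ℕ => (n:ℝ)) :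
    (fun n => S A α n) =o[atTop] fun n : ℕ => (n:ℝ) ^ (α + 1) := by
  have hp : 0 < α + 1 := by linarith
  have h1 : (fun n => S A α n) =O[atTop] fun n => ((cnt A n : ℝ)) ^ (α + 1) := by
    refine Asymptotics.IsBigO.of_bound (1 / (α + 1)) ?_
    filter_upwards with n
    rw [Real.norm_eq_abs, Real.norm_eq_abs, abs_of_nonneg (S_nonneg A α n),
      abs_of_nonneg (Real.rpow_nonneg (Nat.cast_nonneg _) _)]
    have hre : S A α n ≤ T α (cnt A n) := by
      unfold S T cnt
      exact sum_le_sum_Icc_card (fun i => (i:ℝ) ^ α)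
        (fun i => Real.rpow_nonneg (Nat.cast_nonneg i) α)
        (fun i j hi hij => Real.rpow_le_rpow_of_nonpos (by exact_mod_cast hi)
          (by exact_mod_cast hij) hneg)
        _ (fun b hb => (cnt_mem_one_le hb).1)
    have := T_upper_neg hα hneg (cnt A n)
    rw [div_eq_mul_inv, mul_comm] at this
    rw [one_div]
    linarith
  have h2 : (fun n => ((cnt A n : ℝ)) ^ (α + 1)) =o[atTop]
      fun n : ℕ => (n:ℝ) ^ (α + 1) := by
    rw [Asymptotics.isLittleO_iff_tendsto']
    · have hd := h.tendsto_div_nhds_zero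
      have ht : Filter.Tendsto (fun n : ℕ => ((cnt A n : ℝ) / (n:ℝ)) ^ (α + 1))
          atTop (nhds ((0:ℝ) ^ (α + 1))) := hd.rpow_const (Or.inr hp.le)
      rw [Real.zero_rpow hp.ne'] at ht
      refine Filter.Tendsto.congr (fun n => ?_) ht
      exact Real.div_rpow (Nat.cast_nonneg _) (Nat.cast_nonneg _) _
    · filter_upwards [Filter.eventually_ge_atTop 1] with n hn h0
      have hn0 : (0:ℝ) < n := by exact_mod_cast hn
      exact absurd h0 (Real.rpow_pos_of_pos hn0 _).ne'
  exact h1.trans_isLittleO h2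

lemma step_b_neg {α : ℝ} {A : Set ℕ} (hneg : α ≤ 0)
    (hS : (fun n => S A α n) =o[atTop] fun n : ℕ => (n:ℝ) ^ (α + 1)) :
    (fun n => (cnt A n : ℝ)) =o[atTop] fun n : ℕ => (n:ℝ) := by
  have h1 : (fun n => (cnt A n : ℝ)) =O[atTop] fun n => S A α n * (n:ℝ) ^ (-α) := by
    refine Asymptotics.IsBigO.of_bound 1 ?_
    filter_upwards [Filter.eventually_ge_atTop 1] with n hn
    have hn0 : (0:ℝ) < n := by exact_mod_cast hn
    have hna : (0:ℝ) < (n:ℝ) ^ α := Real.rpow_pos_of_pos hn0 α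
    have hcb : (cnt A n : ℝ) * (n:ℝ) ^ α ≤ S A α n := by
      unfold S cnt
      calc (((Finset.Icc 1 n).filter (· ∈ A)).card : ℝ) * (n:ℝ) ^ α
          = ∑ _i ∈ (Finset.Icc 1 n).filter (· ∈ A), (n:ℝ) ^ α := by
            rw [Finset.sum_const]; simp [nsmul_eq_mul]
        _ ≤ ∑ i ∈ (Finset.Icc 1 n).filter (· ∈ A), (i:ℝ) ^ α := by
            refine Finset.sum_le_sum fun i hi => ?_
            obtain ⟨hi1, hi2⟩ := cnt_mem_one_le hi
            exact Real.rpow_le_rpow_of_nonpos (by exact_mod_cast hi1)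
              (by exact_mod_cast hi2) hneg
    rw [Real.norm_eq_abs, Real.norm_eq_abs, abs_of_nonneg (Nat.cast_nonneg _), one_mul,
      abs_of_nonneg (mul_nonneg (S_nonneg A α n) (Real.rpow_nonneg hn0.le _))]
    rw [Real.rpow_neg hn0.le, ← div_eq_mul_inv, le_div_iff₀ hna]
    exact hcb
  have h2 : (fun n => S A α n * (n:ℝ) ^ (-α)) =o[atTop]
      fun n : ℕ => (n:ℝ) ^ (α + 1) * (n:ℝ) ^ (-α) :=
    hS.mul_isBigO (Asymptotics.isBigO_refl _ _)
  refine (h1.trans_isLittleO h2).trans_eventuallyEq ?_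
  filter_upwards [Filter.eventually_ge_atTop 1] with n hn
  have hn0 : (0:ℝ) < n := by exact_mod_cast hn
  rw [← Real.rpow_add hn0]
  norm_num

lemma step_b_pos {α : ℝ} {A : Set ℕ} (hpos : 0 ≤ α)
    (hS : (fun n => S A α n) =o[atTop] fun n : ℕ => (n:ℝ) ^ (α + 1)) :
    (fun n => (cnt A n : ℝ)) =o[atTop] fun n : ℕ => (n:ℝ) := by
  rw [Asymptotics.isLittleO_iff]
  intro c hc
  have hδ : (0:ℝ) < c / 2 := by linarith
  have hc₁ : (0:ℝ) < c / 4 * (c / 2) ^ α := by positivity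
  have h1 := Asymptotics.isLittleO_iff.mp hS hc₁
  filter_upwards [h1, Filter.eventually_ge_atTop 1,
    (tendsto_natCast_atTop_atTop (R := ℝ)).eventually_ge_atTop (4 / c)] with n hSn hn1 hn4
  have hn0 : (0:ℝ) < n := by exact_mod_cast hn1
  set k : ℕ := ⌊c / 2 * (n:ℝ)⌋₊ + 1 with hk
  set B := (Finset.Icc 1 n).filter (· ∈ A) with hBdef
  set B₂ := B.filter (fun i => k < i) with hB₂
  have hsplit : B₂.card + (B.filter (fun i => ¬ k < i)).card = B.card :=
    Finset.card_filter_add_card_filter_not _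
  have hle_k : (B.filter (fun i => ¬ k < i)).card ≤ k := by
    refine le_trans (Finset.card_le_card ?_) (by simp [Nat.card_Icc] : (Finset.Icc 1 k).card ≤ k)
    intro x hx
    obtain ⟨hxB, hxk⟩ := Finset.mem_filter.mp hx
    have hx1 : 1 ≤ x := (cnt_mem_one_le (hBdef ▸ hxB)).1
    exact Finset.mem_Icc.mpr ⟨hx1, by omega⟩
  have hδn : (0:ℝ) ≤ c / 2 * n := by positivity
  have hkgt : c / 2 * (n:ℝ) < (k:ℝ) := by
    have := Nat.lt_floor_add_one (c / 2 * (n:ℝ))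
    rw [hk]; push_cast; push_cast at this; linarith
  have hSlow : (B₂.card : ℝ) * (c / 2 * (n:ℝ)) ^ α ≤ S A α n := by
    calc (B₂.card : ℝ) * (c / 2 * (n:ℝ)) ^ α
        = ∑ _i ∈ B₂, (c / 2 * (n:ℝ)) ^ α := by rw [Finset.sum_const]; simp [nsmul_eq_mul]
      _ ≤ ∑ i ∈ B₂, (i:ℝ) ^ α := by
          refine Finset.sum_le_sum fun i hi => ?_
          have hki : k < i := (Finset.mem_filter.mp hi).2
          have : (k:ℝ) ≤ (i:ℝ) := by exact_mod_cast hki.le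
          exact Real.rpow_le_rpow hδn (by linarith) hpos
      _ ≤ S A α n := by
          unfold S
          exact Finset.sum_le_sum_of_subset_of_nonneg
            (by rw [hB₂, hBdef] at *; exact Finset.filter_subset _ _)
            (fun i _ _ => Real.rpow_nonneg (Nat.cast_nonneg i) α)
  have hSn' : S A α n ≤ c / 4 * (c / 2) ^ α * (n:ℝ) ^ (α + 1) := by
    rw [Real.norm_eq_abs, Real.norm_eq_abs, abs_of_nonneg (S_nonneg A α n),
      abs_of_nonneg (Real.rpow_nonneg hn0.le _)] at hSn
    exact hSn
  have hnpos : (0:ℝ) < (n:ℝ) ^ α := Real.rpow_pos_of_pos hn0 α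
  have hcpos : (0:ℝ) < (c / 2) ^ α := Real.rpow_pos_of_pos hδ α
  have hB₂le : (B₂.card : ℝ) ≤ c / 4 * (n:ℝ) := by
    have h := le_trans hSlow hSn'
    rw [Real.mul_rpow hδ.le hn0.le] at h
    rw [add_comm, Real.rpow_one_add' hn0.le (by intro hh; linarith)] at h
    have h2' : c / 4 * (c / 2) ^ α * ((n:ℝ) * (n:ℝ) ^ α)
        = (c / 4 * (n:ℝ)) * ((c / 2) ^ α * (n:ℝ) ^ α) := by ring
    rw [h2'] at h
    exact (mul_le_mul_iff_of_pos_right (mul_pos hcpos hnpos)).mp h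
  have hkle : (k:ℝ) ≤ c / 2 * n + 1 := by
    have := Nat.floor_le hδn
    rw [hk]; push_cast; linarith
  have hone : (1:ℝ) ≤ c / 4 * n := by
    have h4 : (0:ℝ) < c / 4 := by linarith
    have := mul_le_mul_of_nonneg_left hn4 h4.le
    have he : c / 4 * (4 / c) = 1 := by field_simp
    linarith [he ▸ this]
  have hcnt : (cnt A n : ℝ) ≤ (B₂.card : ℝ) + (k:ℝ) := by
    have hnat : cnt A n ≤ B₂.card + k := by
      have : cnt A n = B.card := by rw [hBdef]; rfl
      omega
    exact_mod_cast hnat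
  rw [Real.norm_eq_abs, Real.norm_eq_abs, abs_of_nonneg (Nat.cast_nonneg _),
    abs_of_nonneg hn0.le]
  calc (cnt A n : ℝ) ≤ (B₂.card : ℝ) + (k:ℝ) := hcnt
    _ ≤ c / 4 * n + (c / 2 * n + 1) := by linarith
    _ ≤ c / 4 * n + c / 2 * n + c / 4 * n := by linarith
    _ = c * n := by ring

lemma key {α : ℝ} (hα : -1 < α) (A : Set ℕ) :
    A ∈ Ialpha α ↔ (fun n => (cnt A n : ℝ)) =o[atTop] fun n : ℕ => (n:ℝ) := by
  rw [mem_Ialpha_iff]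
  constructor
  · intro h
    have hS : (fun n => S A α n) =o[atTop] fun n : ℕ => (n:ℝ) ^ (α + 1) :=
      h.trans_isBigO (T_isBigO hα)
    rcases le_or_gt 0 α with hsgn | hsgn
    · exact step_b_pos hsgn hS
    · exact step_b_neg hsgn.le hS
  · intro h
    have hS : (fun n => S A α n) =o[atTop] fun n : ℕ => (n:ℝ) ^ (α + 1) := by
      rcases le_or_gt 0 α with hsgn | hsgn
      · exact step_a_pos hsgn h
      · exact step_a_neg hα hsgn.le h
    exact hS.trans_isBigO (rpow_isBigO_T hα)


end IalphaAux
end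
end IalphaProof

theorem Ialpha_eq_Izero' (α : ℝ) (hα : -1 < α) : Ialpha α = Ialpha 0 := by
  ext A
  rw [IalphaAux.key hα A, IalphaAux.key (by norm_num : (-1:ℝ) < 0) A]

/-- For every real `α > -1`, the ideal `I_α` coincides with the ideal `I_0`
of natural density zero sets. -/
theorem Ialpha_eq_Izero (α : ℝ) (hα : -1 < α) : Ialpha α = Ialpha 0 := Ialpha_eq_Izero' α hα
end

section
/- Let x be a sequence in a first countable topological space X and let I be an ideal on ℕ which is F_σ-separated from its dual filter. Then for every ordinary limit point ℓ of x, the set {ω ∈ (0,1] : ℓ is an I-cluster point of the subsequence x↾ω} is comeager in (0,1]. -/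
open Filter Topology Set MeasureTheory
open scoped ENNReal

section DyAuxSection
noncomputable section

namespace DyAux

lemma two_pow_split {i M : ℕ} (h : i ≤ M) : (2:ℝ)^M = 2^i * 2^(M - i) := by
  rw [← pow_add]; congr 1; omega

/-- ⌈2^i ω⌉ is determined by ⌈2^M ω⌉ for i ≤ M. -/
lemma ceil_pow_formula (ω : ℝ) {i M : ℕ} (h : i ≤ M) :
    ⌈(2:ℝ)^i * ω⌉ = ⌈((⌈(2:ℝ)^M * ω⌉ : ℝ)) / 2^(M-i)⌉ := by
  set c : ℤ := ⌈(2:ℝ)^M * ω⌉ with hc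
  have hpos : (0:ℝ) < 2^(M-i) := by positivity
  have h1 : (2:ℝ)^M * ω ≤ c := Int.le_ceil _
  have h2 : (c:ℝ) - 1 < (2:ℝ)^M * ω := by
    have := Int.ceil_lt_add_one ((2:ℝ)^M * ω); rw [← hc] at this; linarith
  have key : (2:ℝ)^i * ω = (2:ℝ)^M * ω / 2^(M-i) := by
    rw [two_pow_split h]; field_simp
  apply le_antisymm
  · apply Int.ceil_mono
    rw [key, div_le_div_iff_of_pos_right hpos]  -- guess name; fix below
    exact h1
  · set K : ℤ := ⌈(c:ℝ) / 2^(M-i)⌉ with hK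
    have hK1 : (K:ℝ) - 1 < (c:ℝ) / 2^(M-i) := by
      have := Int.ceil_lt_add_one ((c:ℝ) / 2^(M-i)); rw [← hK] at this; linarith
    have hint : ((K - 1) * 2^(M-i) : ℤ) < c := by
      have h3 : ((K:ℝ) - 1) * 2^(M-i) < c := by
        rw [← lt_div_iff₀ hpos]; exact hK1
      exact_mod_cast (by push_cast; linarith : (((K - 1) * 2^(M-i) : ℤ) : ℝ) < (c:ℝ))
    have hle : ((K - 1) * 2^(M-i) : ℤ) ≤ c - 1 := by omega
    have h4 : ((K:ℝ) - 1) * 2^(M-i) ≤ (c:ℝ) - 1 := by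
      have : (((K - 1) * 2^(M-i) : ℤ) : ℝ) ≤ ((c - 1 : ℤ) : ℝ) := by exact_mod_cast hle
      push_cast at this; linarith
    have hlt : (K:ℝ) - 1 < (2:ℝ)^i * ω := by
      rw [key, lt_div_iff₀ hpos]; linarith
    have hlt' : ((K - 1 : ℤ) : ℝ) < (2:ℝ)^i * ω := by push_cast; linarith
    have := Int.lt_ceil.mpr hlt'
    omega

lemma ceil_pow_eq_of_ceil_eq {ω ω' : ℝ} {i M : ℕ} (h : i ≤ M)
    (hM : ⌈(2:ℝ)^M * ω⌉ = ⌈(2:ℝ)^M * ω'⌉) : ⌈(2:ℝ)^i * ω⌉ = ⌈(2:ℝ)^i * ω'⌉ := by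
  rw [ceil_pow_formula ω h, ceil_pow_formula ω' h, hM]

lemma digit_eq_of_ceil_eq {ω ω' : ℝ} {i M : ℕ} (h : i < M)
    (hM : ⌈(2:ℝ)^M * ω⌉ = ⌈(2:ℝ)^M * ω'⌉) : dyadicDigit ω i = dyadicDigit ω' i := by
  unfold dyadicDigit
  rw [ceil_pow_eq_of_ceil_eq (by omega : i + 1 ≤ M) hM,
    ceil_pow_eq_of_ceil_eq (by omega : i ≤ M) hM]

lemma digit_zero_or_one (ω : ℝ) (i : ℕ) : dyadicDigit ω i = 0 ∨ dyadicDigit ω i = 1 := by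
  unfold dyadicDigit
  have h1 : ⌈(2:ℝ)^(i+1) * ω⌉ ≤ 2 * ⌈(2:ℝ)^i * ω⌉ := by
    apply Int.ceil_le.mpr
    have := Int.le_ceil ((2:ℝ)^i * ω)
    push_cast
    rw [pow_succ]
    nlinarith
  have h2 : 2 * ⌈(2:ℝ)^i * ω⌉ - 1 ≤ ⌈(2:ℝ)^(i+1) * ω⌉ := by
    have hlt : ((2 * ⌈(2:ℝ)^i * ω⌉ - 2 : ℤ) : ℝ) < (2:ℝ)^(i+1) * ω := by
      have := Int.ceil_lt_add_one ((2:ℝ)^i * ω)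
      push_cast
      rw [pow_succ]
      nlinarith
    have := Int.lt_ceil.mpr hlt
    omega
  omega

lemma infinite_ones (ω : ℝ) :
    {i | dyadicDigit ω i = 1}.Infinite := by
  apply Set.infinite_of_forall_exists_gt
  intro a
  by_contra hcon
  push_neg at hcon
  -- all digits j > a are 0
  set e : ℕ → ℝ := fun j => (2:ℝ)^j * ω - ⌈(2:ℝ)^j * ω⌉ + 1 with he
  have hepos : ∀ j, 0 < e j := fun j => by
    have := Int.ceil_lt_add_one ((2:ℝ)^j * ω); simp only [he]; linarith
  have hele : ∀ j, e j ≤ 1 := fun j => by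
    have := Int.le_ceil ((2:ℝ)^j * ω); simp only [he]; linarith
  have hdouble : ∀ j, a < j → e (j + 1) = 2 * e j := by
    intro j hj
    have hd0 : dyadicDigit ω j = 0 := by
      rcases digit_zero_or_one ω j with h | h
      · exact h
      · have := hcon j h; omega
    unfold dyadicDigit at hd0
    have hceil : ⌈(2:ℝ)^(j+1) * ω⌉ = 2 * ⌈(2:ℝ)^j * ω⌉ - 1 := by omega
    simp only [he, hceil]
    push_cast
    rw [pow_succ]
    ring
  have hgrow : ∀ k : ℕ, e (a + 1 + k) = 2^k * e (a + 1) := by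
    intro k
    induction k with
    | zero => simp
    | succ n ih =>
      have : a < a + 1 + n := by omega
      have h2 := hdouble _ this
      rw [show a + 1 + (n+1) = (a + 1 + n) + 1 by omega, h2, ih, pow_succ]
      ring
  obtain ⟨k, hk⟩ := pow_unbounded_of_one_lt (1 / e (a + 1)) (by norm_num : (1:ℝ) < 2)
  have h1 : 1 < 2^k * e (a + 1) := by
    rw [div_lt_iff₀ (hepos (a+1))] at hk; linarith
  have := hele (a + 1 + k)
  rw [hgrow k] at this
  linarith

end DyAux


namespace DyAux

/-- ⌈2^M ω⌉ = 1 + ∑_{i<M} d_i 2^{M-1-i} for ω ∈ (0,1]. -/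
lemma ceil_eq_digit_sum {ω : ℝ} (hω : ω ∈ Set.Ioc (0:ℝ) 1) (M : ℕ) :
    ⌈(2:ℝ)^M * ω⌉ = 1 + ∑ i ∈ Finset.range M, dyadicDigit ω i * 2^(M-1-i) := by
  induction M with
  | zero =>
    simp only [pow_zero, one_mul, Finset.range_zero, Finset.sum_empty, add_zero]
    have h1 : ⌈ω⌉ ≤ 1 := Int.ceil_le.mpr (by exact_mod_cast hω.2)
    have h2 : 0 < ⌈ω⌉ := Int.lt_ceil.mpr (by exact_mod_cast hω.1)
    omega
  | succ M ih =>
    have hd : ⌈(2:ℝ)^(M+1) * ω⌉ = 2 * ⌈(2:ℝ)^M * ω⌉ + dyadicDigit ω M - 1 := by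
      unfold dyadicDigit; ring
    rw [hd, ih, Finset.sum_range_succ]
    have hsum : ∑ i ∈ Finset.range M, dyadicDigit ω i * 2^(M+1-1-i)
        = 2 * ∑ i ∈ Finset.range M, dyadicDigit ω i * 2^(M-1-i) := by
      rw [Finset.mul_sum]
      apply Finset.sum_congr rfl
      intro i hi
      rw [Finset.mem_range] at hi
      have : M + 1 - 1 - i = (M - 1 - i) + 1 := by omega
      rw [this, pow_succ]; ring
    rw [hsum]
    have : M + 1 - 1 - M = 0 := by omega
    rw [this]
    ring

section construction

variable (d : ℕ → Bool)

noncomputable def omegaOf : ℝ := ∑' i, (if d i then ((2:ℝ)^(i+1))⁻¹ else 0)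

def nInt (M : ℕ) : ℤ := ∑ i ∈ Finset.range M, (if d i then (2:ℤ)^(M-1-i) else 0)

lemma summable_geom : Summable (fun i : ℕ => ((2:ℝ)^(i+1))⁻¹) := by
  have : (fun i : ℕ => ((2:ℝ)^(i+1))⁻¹) = fun i : ℕ => (1/2 : ℝ) / 2 ^ i := by
    funext i; rw [pow_succ]; field_simp
  rw [this]
  have := summable_geometric_two.div_const 2
  refine this.congr (fun i => ?_)
  rw [div_pow, one_pow]
  ring

lemma tsum_geom : ∑' i : ℕ, ((2:ℝ)^(i+1))⁻¹ = 1 := by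
  have : (fun i : ℕ => ((2:ℝ)^(i+1))⁻¹) = fun i : ℕ => (1:ℝ) / 2 / 2 ^ i := by
    funext i; rw [pow_succ]; field_simp
  rw [this, tsum_geometric_two' 1]

lemma summable_f : Summable (fun i => (if d i then ((2:ℝ)^(i+1))⁻¹ else 0)) := by
  apply Summable.of_nonneg_of_le (fun i => by split <;> positivity)
    (fun i => by split <;> [exact le_refl _; positivity]) (summable_geom)

end construction

end DyAux

namespace DyAux

variable {d : ℕ → Bool}

lemma ceil_omegaOf (hd : {i | d i = true}.Infinite) (M : ℕ) :
    ⌈(2:ℝ)^M * omegaOf d⌉ = nInt d M + 1 := by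
  set f : ℕ → ℝ := fun i => (if d i then ((2:ℝ)^(i+1))⁻¹ else 0) with hf
  have hsum : Summable f := summable_f d
  have hsum2 : Summable (fun i => (2:ℝ)^M * f i) := hsum.mul_left _
  have hsplit : ∑ i ∈ Finset.range M, (2:ℝ)^M * f i + ∑' i, (2:ℝ)^M * f (i + M)
      = ∑' i, (2:ℝ)^M * f i := Summable.sum_add_tsum_nat_add M hsum2
  have heq : (2:ℝ)^M * omegaOf d = ∑' i, (2:ℝ)^M * f i := by
    rw [omegaOf, ← tsum_mul_left]
  set r : ℝ := ∑' i, (2:ℝ)^M * f (i + M) with hr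
  have hfirst : ∑ i ∈ Finset.range M, (2:ℝ)^M * f i = ((nInt d M : ℤ) : ℝ) := by
    rw [nInt]
    push_cast
    apply Finset.sum_congr rfl
    intro i hi
    rw [Finset.mem_range] at hi
    simp only [hf]
    split
    · rw [mul_inv_eq_iff_eq_mul₀ (by positivity), ← pow_add]
      congr 1; omega
    · simp
  -- rewrite tail
  have htail : r = ∑' i, (if d (i + M) then ((2:ℝ)^(i+1))⁻¹ else 0) := by
    rw [hr]
    congr 1
    funext i
    simp only [hf]
    split
    · have h2 : (2:ℝ)^(i+M+1) = 2^M * 2^(i+1) := by rw [← pow_add]; congr 1; omega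
      rw [h2, mul_inv, ← mul_assoc, mul_inv_cancel₀ (by positivity), one_mul]
    · simp
  have hrle : r ≤ 1 := by
    rw [htail, ← tsum_geom]
    exact Summable.tsum_le_tsum (fun i => by split <;> [exact le_refl _; positivity])
      (by apply Summable.of_nonneg_of_le (fun i => by split <;> positivity)
            (fun i => by split <;> [exact le_refl _; positivity]) summable_geom)
      summable_geom
  have hrpos : 0 < r := by
    obtain ⟨j, hj, hjM⟩ := hd.exists_gt M
    have hjM' : j = (j - M) + M := by omega
    have hle := Summable.le_tsum (f := fun i => (if d (i + M) then ((2:ℝ)^(i+1))⁻¹ else 0))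
      (by apply Summable.of_nonneg_of_le (fun i => by split <;> positivity)
            (fun i => by split <;> [exact le_refl _; positivity]) summable_geom)
      (j - M) (fun k _ => by split <;> positivity)
    rw [← htail] at hle
    have hdt : d ((j - M) + M) = true := by rw [← hjM']; exact hj
    simp only [hdt, if_true] at hle
    have hps : (0:ℝ) < ((2:ℝ)^(j - M + 1))⁻¹ := by positivity
    linarith
  have hval : (2:ℝ)^M * omegaOf d = ((nInt d M : ℤ) : ℝ) + r := by
    rw [heq, ← hsplit, hfirst]
  rw [hval]
  have h1 : ⌈((nInt d M : ℤ) : ℝ) + r⌉ ≤ nInt d M + 1 := by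
    apply Int.ceil_le.mpr; push_cast; linarith
  have h2 : nInt d M < ⌈((nInt d M : ℤ) : ℝ) + r⌉ := by
    apply Int.lt_ceil.mpr; push_cast; linarith
  omega

end DyAux

namespace DyAux

variable {d : ℕ → Bool}

lemma omegaOf_mem (hd : {i | d i = true}.Infinite) : omegaOf d ∈ Set.Ioc (0:ℝ) 1 := by
  have h := ceil_omegaOf hd 0
  simp only [pow_zero, one_mul, nInt, Finset.range_zero, Finset.sum_empty, zero_add] at h
  constructor
  · have := Int.lt_ceil (z := 0) (a := omegaOf d)
    rw [h] at this
    exact_mod_cast this.mp (by norm_num)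
  · have := Int.ceil_le (z := 1) (a := omegaOf d)
    rw [h] at this
    exact_mod_cast this.mp le_rfl

lemma nInt_succ (d : ℕ → Bool) (i : ℕ) :
    nInt d (i + 1) = 2 * nInt d i + (if d i then 1 else 0) := by
  unfold nInt
  rw [Finset.sum_range_succ, Finset.mul_sum]
  congr 1
  · apply Finset.sum_congr rfl
    intro j hj
    rw [Finset.mem_range] at hj
    split
    · rw [show i + 1 - 1 - j = (i - 1 - j) + 1 by omega, pow_succ]; ring
    · simp
  · simp [show i + 1 - 1 - i = 0 by omega]

lemma digit_omegaOf (hd : {i | d i = true}.Infinite) (i : ℕ) :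
    dyadicDigit (omegaOf d) i = if d i then 1 else 0 := by
  unfold dyadicDigit
  rw [ceil_omegaOf hd (i+1), ceil_omegaOf hd i, nInt_succ]
  split <;> omega

end DyAux


namespace DyAux

variable {p q : ℕ → Prop} {M n : ℕ} [DecidablePred p] [DecidablePred q]

lemma count_congr (h : ∀ i, i < M → (p i ↔ q i)) {m : ℕ} (hm : m ≤ M) :
    Nat.count p m = Nat.count q m := by
  induction m with
  | zero => simp
  | succ k ih =>
    rw [Nat.count_succ, Nat.count_succ, ih (by omega)]
    congr 1
    simp only [h k (by omega)]

lemma nth_lt_of_lt_count (hp : (setOf p).Infinite) (h : n < Nat.count p M) :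
    Nat.nth p n < M := by
  by_contra hc
  push_neg at hc
  have h1 : Nat.count p M ≤ Nat.count p (Nat.nth p n) := Nat.count_monotone p hc
  rw [Nat.count_nth_of_infinite hp] at h1
  omega

lemma lt_count_of_nth_lt (hp : (setOf p).Infinite) (h : Nat.nth p n < M) :
    n < Nat.count p M := by
  have h1 : Nat.count p (Nat.nth p n + 1) ≤ Nat.count p M := Nat.count_monotone p (by omega)
  rw [Nat.count_succ] at h1
  rw [Nat.count_nth_of_infinite hp] at h1
  simp only [Nat.nth_mem_of_infinite hp n, if_true] at h1
  omega

lemma nth_congr (hp : (setOf p).Infinite) (hq : (setOf q).Infinite)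
    (h : ∀ i, i < M → (p i ↔ q i)) (hn : Nat.nth p n < M) :
    Nat.nth q n = Nat.nth p n := by
  classical
  have hpm : p (Nat.nth p n) := Nat.nth_mem_of_infinite hp n
  have hqm : q (Nat.nth p n) := (h _ hn).mp hpm
  have hcount : Nat.count q (Nat.nth p n) = n := by
    rw [← count_congr h (le_of_lt hn), Nat.count_nth_of_infinite hp]
  have := Nat.nth_count hqm
  rw [hcount] at this
  exact this

lemma isNowhereDense_of_aux {α : Type*} [TopologicalSpace α] {s : Set α}
    (h : ∀ U : Set α, IsOpen U → U.Nonempty →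
      ∃ V : Set α, IsOpen V ∧ V.Nonempty ∧ V ⊆ U ∧ V ∩ s = ∅) :
    IsNowhereDense s := by
  rw [IsNowhereDense]
  by_contra hne
  obtain ⟨V, hVo, hVne, hVsub, hVdisj⟩ :=
    h _ isOpen_interior (nonempty_iff_ne_empty.mpr hne)
  obtain ⟨v, hv⟩ := hVne
  have hcl : v ∈ closure s := interior_subset (hVsub hv)
  have := mem_closure_iff.mp hcl V hVo hv
  rw [hVdisj] at this
  exact Set.not_nonempty_empty this

lemma notMem_closed_cylinder {F : Set (ℕ → Bool)} (hF : IsClosed F) {z : ℕ → Bool}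
    (hz : z ∉ F) : ∃ N : ℕ, ∀ y : ℕ → Bool, (∀ n < N, y n = z n) → y ∉ F := by
  have hopen : IsOpen Fᶜ := hF.isOpen_compl
  obtain ⟨I, u, hu, hsub⟩ := isOpen_pi_iff.mp hopen z hz
  refine ⟨(I.sup id) + 1, fun y hy hyF => ?_⟩
  apply hsub _ hyF
  intro a ha
  rw [hy a (by have := Finset.le_sup (f := id) ha; simp only [id] at this; omega)]
  exact (hu a ha).2

end DyAux

end
end DyAuxSection

/-- If `I` is `F_σ`-separated from its dual filter, then for every ordinary
limit point `l` of `x`, `{ω ∈ (0,1] : l is an I-cluster point of x↾ω}` is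
comeager in `(0,1]`. -/
theorem clusterPt_subseq_comeager {X : Type*} [TopologicalSpace X]
    [FirstCountableTopology X]
    (x : ℕ → X) (I : Set (Set ℕ)) (hI : IsIdealOn I) (hsep : FsigmaSeparated I)
    (l : X) (hl : l ∈ limitPts x) :
    IsMeagre {ω : Set.Ioc (0:ℝ) 1 | ¬ IdealClusterPt I (subseq x ↑ω) l} := by
  classical
  obtain ⟨A, ⟨F, hFc, hFeq⟩, hIA, hAdual⟩ := hsep
  obtain ⟨ks, hks, hksx⟩ := hl
  obtain ⟨U, hU⟩ := (𝓝 l).exists_antitone_basis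
  have hUm : ∀ m, U m ∈ 𝓝 l := fun m => hU.toHasBasis.mem_of_mem trivial
  have hinf : ∀ m : ℕ, {i | x i ∈ U m}.Infinite := by
    intro m
    apply Set.infinite_of_forall_exists_gt
    intro a
    have hev := hksx (hUm m)
    rw [Filter.mem_map, Filter.mem_atTop_sets] at hev
    obtain ⟨j0, hj0⟩ := hev
    refine ⟨ks (max j0 (a+1)), hj0 _ (le_max_left _ _), ?_⟩
    have h1 : max j0 (a+1) ≤ ks (max j0 (a+1)) := hks.le_apply
    omega
  set C : ℕ → ℕ → Set (Set.Ioc (0:ℝ) 1) := fun m j =>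
    {ω | chi {n | x (Nat.nth (fun i => dyadicDigit (↑ω) i = 1) n) ∈ U m} ∈ F j} with hC
  have hcover : {ω : Set.Ioc (0:ℝ) 1 | ¬ IdealClusterPt I (subseq x ↑ω) l}
      ⊆ ⋃ m, ⋃ j, C m j := by
    intro ω hω
    simp only [Set.mem_setOf_eq, IdealClusterPt] at hω
    push_neg at hω
    obtain ⟨V, hV, hVI⟩ := hω
    obtain ⟨m, -, hm⟩ := hU.toHasBasis.mem_iff.mp hV
    set S : Set ℕ := {n | x (Nat.nth (fun i => dyadicDigit (↑ω : ℝ) i = 1) n) ∈ U m} with hS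
    have hSsub : S ⊆ {n | subseq x (↑ω) n ∈ V} := fun n hn => hm hn
    have hSI : S ∈ I := hI.1 hSsub hVI
    have hSA : chi S ∈ A := hIA ⟨S, hSI, rfl⟩
    rw [hFeq] at hSA
    obtain ⟨j, hj⟩ := Set.mem_iUnion.mp hSA
    exact Set.mem_iUnion.mpr ⟨m, Set.mem_iUnion.mpr ⟨j, hj⟩⟩
  have hCnd : ∀ m j, IsNowhereDense (C m j) := by
    intro m j
    apply DyAux.isNowhereDense_of_aux
    intro Usub hUo hUne
    obtain ⟨ω₀, hω₀U⟩ := hUne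
    obtain ⟨t, hto, htp⟩ := isOpen_induced_iff.mp hUo
    have hω₀t : (ω₀ : ℝ) ∈ t := by rw [← htp] at hω₀U; exact hω₀U
    obtain ⟨ε, hε, hball⟩ := Metric.isOpen_iff.mp hto _ hω₀t
    obtain ⟨M₀, hM₀⟩ := exists_pow_lt_of_lt_one hε (by norm_num : ((2:ℝ)⁻¹) < 1)
    set d : ℕ → Bool := fun i =>
      if i < M₀ then decide (dyadicDigit (ω₀:ℝ) i = 1) else decide (x i ∈ U m) with hd
    have hdinf : {i | d i = true}.Infinite := by
      apply Set.Infinite.mono (s := {i | x i ∈ U m} \ Set.Iio M₀)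
      · rintro i ⟨hxi, hiM⟩
        simp only [Set.mem_Iio, not_lt] at hiM
        simp only [Set.mem_setOf_eq, hd]
        rw [if_neg (by omega)]
        exact decide_eq_true hxi
      · exact (hinf m).diff (Set.finite_Iio _)
    set ω₁ : ℝ := DyAux.omegaOf d with hω₁
    have hω₁mem : ω₁ ∈ Set.Ioc (0:ℝ) 1 := DyAux.omegaOf_mem hdinf
    have hdig : ∀ i, i < M₀ → dyadicDigit ω₁ i = dyadicDigit (ω₀:ℝ) i := by
      intro i hi
      rw [hω₁, DyAux.digit_omegaOf hdinf]
      simp only [hd, if_pos hi]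
      rcases DyAux.digit_zero_or_one (ω₀:ℝ) i with h | h <;> simp [h]
    have hceilM₀ : ⌈(2:ℝ)^M₀ * ω₁⌉ = ⌈(2:ℝ)^M₀ * (ω₀:ℝ)⌉ := by
      rw [DyAux.ceil_eq_digit_sum hω₁mem, DyAux.ceil_eq_digit_sum ω₀.2]
      congr 1
      apply Finset.sum_congr rfl
      intro i hi
      rw [Finset.mem_range] at hi
      rw [hdig i hi]
    set p : ℕ → Prop := fun i => dyadicDigit ω₁ i = 1 with hp
    have hpinf : (setOf p).Infinite := DyAux.infinite_ones ω₁
    have hpd : ∀ i, p i → d i = true := by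
      intro i hpi
      simp only [hp, Set.mem_setOf_eq] at hpi
      rw [hω₁, DyAux.digit_omegaOf hdinf] at hpi
      by_contra hcon
      rw [if_neg (by simpa using hcon)] at hpi
      exact absurd hpi (by norm_num)
    set S₁ : Set ℕ := {n | x (Nat.nth p n) ∈ U m} with hS₁
    have hcof : S₁ᶜ ⊆ Set.Iio (Nat.count p M₀) := by
      intro n hn
      rw [Set.mem_Iio]
      by_contra hcon
      push_neg at hcon
      have hnth : M₀ ≤ Nat.nth p n := by
        by_contra h2
        push_neg at h2
        exact absurd (DyAux.lt_count_of_nth_lt hpinf h2) (by omega)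
      have hpn : p (Nat.nth p n) := Nat.nth_mem_of_infinite hpinf n
      have hdn : d (Nat.nth p n) = true := hpd _ hpn
      simp only [hd, if_neg (by omega : ¬ Nat.nth p n < M₀)] at hdn
      exact hn (of_decide_eq_true hdn)
    have hS₁c : S₁ᶜ ∈ I := hI.2.2.1 _ ((Set.finite_Iio (Nat.count p M₀)).subset hcof)
    have hchiF : chi S₁ ∉ F j := by
      intro hmem
      have hA : chi S₁ ∈ A := hFeq ▸ Set.mem_iUnion.mpr ⟨j, hmem⟩
      have hmem2 : chi S₁ ∈ A ∩ chi '' {S : Set ℕ | Sᶜ ∈ I} := ⟨hA, ⟨S₁, hS₁c, rfl⟩⟩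
      rw [hAdual] at hmem2
      exact hmem2
    obtain ⟨N, hN⟩ := DyAux.notMem_closed_cylinder (hFc j) hchiF
    set M₁ : ℕ := max M₀ (Nat.nth p N + 1) with hM₁
    have hM₀M₁ : M₀ ≤ M₁ := le_max_left _ _
    have h2pos : (0:ℝ) < 2^M₁ := by positivity
    have h2pos0 : (0:ℝ) < 2^M₀ := by positivity
    set c' : ℤ := ⌈(2:ℝ)^M₁ * ω₁⌉ with hc'
    have hc'1 : 1 ≤ c' := by
      have h0 : (0:ℝ) < 2^M₁ * ω₁ := mul_pos h2pos hω₁mem.1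
      have h0' := Int.lt_ceil.mpr (show ((0:ℤ):ℝ) < 2^M₁ * ω₁ by exact_mod_cast h0)
      omega
    have hc'2 : (c' : ℝ) ≤ 2^M₁ := by
      have h1 : (2:ℝ)^M₁ * ω₁ ≤ 2^M₁ := by nlinarith [hω₁mem.2]
      have h2 : c' ≤ ((2:ℤ))^M₁ := by
        apply Int.ceil_le.mpr
        push_cast
        exact h1
      exact_mod_cast h2
    set V : Set ℝ := Set.Ioo (((c' - 1 : ℤ):ℝ)/2^M₁) ((c' : ℝ)/2^M₁) with hVdef
    have hVsub01 : V ⊆ Set.Ioc (0:ℝ) 1 := by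
      rintro y ⟨hy1, hy2⟩
      constructor
      · have hnn : (0:ℝ) ≤ ((c' - 1 : ℤ):ℝ)/2^M₁ := by
          apply div_nonneg _ (le_of_lt h2pos)
          exact_mod_cast (by omega : (0:ℤ) ≤ c' - 1)
        linarith
      · have hle1 : (c' : ℝ)/2^M₁ ≤ 1 := by
          rw [div_le_one h2pos]; exact hc'2
        linarith
    have hceilV : ∀ y ∈ V, ⌈(2:ℝ)^M₁ * y⌉ = c' := by
      rintro y ⟨hy1, hy2⟩
      have hu : (2:ℝ)^M₁ * y < c' := by
        have := (lt_div_iff₀ h2pos).mp hy2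
        linarith [this]
      have hlo : ((c' - 1 : ℤ):ℝ) < (2:ℝ)^M₁ * y := by
        have := (div_lt_iff₀ h2pos).mp hy1
        linarith [this]
      have h1 : ⌈(2:ℝ)^M₁ * y⌉ ≤ c' := Int.ceil_le.mpr (le_of_lt hu)
      have h2 : c' - 1 < ⌈(2:ℝ)^M₁ * y⌉ := Int.lt_ceil.mpr hlo
      omega
    have hVball : ∀ y ∈ V, y ∈ Metric.ball (ω₀:ℝ) ε := by
      intro y hy
      have hMeq : ⌈(2:ℝ)^M₁ * y⌉ = ⌈(2:ℝ)^M₁ * ω₁⌉ := (hceilV y hy).trans hc'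
      have hcy : ⌈(2:ℝ)^M₀ * y⌉ = ⌈(2:ℝ)^M₀ * (ω₀:ℝ)⌉ :=
        (DyAux.ceil_pow_eq_of_ceil_eq hM₀M₁ hMeq).trans hceilM₀
      set c0 : ℤ := ⌈(2:ℝ)^M₀ * (ω₀:ℝ)⌉ with hc0
      have hy1 : (2:ℝ)^M₀ * y ≤ c0 := by rw [← hcy]; exact Int.le_ceil _
      have hy2 : (c0:ℝ) - 1 < 2^M₀ * y := by
        have h3 := Int.ceil_lt_add_one ((2:ℝ)^M₀ * y)
        rw [hcy] at h3
        linarith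
      have hw1 : (2:ℝ)^M₀ * (ω₀:ℝ) ≤ c0 := Int.le_ceil _
      have hw2 : (c0:ℝ) - 1 < 2^M₀ * (ω₀:ℝ) := by
        have h3 := Int.ceil_lt_add_one ((2:ℝ)^M₀ * (ω₀:ℝ))
        linarith
      have hone : (2:ℝ)^M₀ * (2⁻¹)^M₀ = 1 := by
        rw [← mul_pow]; norm_num
      have heps : 1 < (2:ℝ)^M₀ * ε := by nlinarith [hM₀]
      rw [Metric.mem_ball, Real.dist_eq, abs_lt]
      constructor
      · nlinarith
      · nlinarith
    refine ⟨Subtype.val ⁻¹' V, IsOpen.preimage continuous_subtype_val isOpen_Ioo, ?_, ?_, ?_⟩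
    · -- nonempty
      have hlt2 : ((c' - 1 : ℤ):ℝ)/2^M₁ < (c':ℝ)/2^M₁ := by
        gcongr
        · push_cast; linarith
      set μ : ℝ := (((c' - 1 : ℤ):ℝ)/2^M₁ + (c':ℝ)/2^M₁)/2 with hμ
      have hμV : μ ∈ V := ⟨by rw [hμ]; linarith, by rw [hμ]; linarith⟩
      exact ⟨⟨μ, hVsub01 hμV⟩, hμV⟩
    · -- subset
      rintro ⟨y, hy01⟩ hyV
      have := hball (hVball y hyV)
      rw [← htp]
      exact this
    · -- disjoint from C m j
      rw [Set.eq_empty_iff_forall_notMem]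
      rintro ⟨y, hy01⟩ ⟨hyV, hyC⟩
      have hMeq : ⌈(2:ℝ)^M₁ * y⌉ = ⌈(2:ℝ)^M₁ * ω₁⌉ := (hceilV y hyV).trans hc'
      set q : ℕ → Prop := fun i => dyadicDigit y i = 1 with hq
      have hqinf : (setOf q).Infinite := DyAux.infinite_ones y
      have hagree : ∀ i, i < M₁ → (p i ↔ q i) := by
        intro i hi
        simp only [hp, hq]
        rw [DyAux.digit_eq_of_ceil_eq hi hMeq]
      have hnth : ∀ n, n < N → Nat.nth q n = Nat.nth p n := by
        intro n hn
        apply DyAux.nth_congr hpinf hqinf hagree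
        have h1 : Nat.nth p n ≤ Nat.nth p N := (Nat.nth_le_nth hpinf).mpr (by omega)
        omega
      have hchi : ∀ n, n < N → chi {n' | x (Nat.nth q n') ∈ U m} n = chi S₁ n := by
        intro n hn
        simp only [chi, hS₁, Set.mem_setOf_eq, hnth n hn]
      exact hN _ hchi hyC
  apply IsMeagre.mono hcover
  apply isMeagre_iUnion
  intro m
  apply isMeagre_iUnion
  intro j
  refine isMeagre_iff_countable_union_isNowhereDense.mpr
    ⟨{C m j}, ?_, Set.countable_singleton _, ?_⟩
  · rintro s hs
    rw [Set.mem_singleton_iff] at hs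
    rw [hs]
    exact hCnd m j
  · rw [Set.sUnion_singleton]
end

section
/- Let x be a sequence in a first countable space X, let Z_μ be a generalized density ideal determined by a partition (I_n) of ℕ into nonempty finite sets and submeasures (μ_n) concentrated on the I_n with limsup μ_n(I_n) > 0, and fix q ∈ (0, limsup_n μ_n(I_n)). Fix ℓ ∈ X with decreasing local base (U_m). Then the set V_ℓ(x;q) of all ω ∈ (0,1] such that limsup_n μ_n({k : (x↾ω)_k ∈ U_m} ∩ I_n) ≥ q for every m is either comeager in (0,1] or empty. -/
open Filter Topology Set MeasureTheory
open scoped ENNReal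

noncomputable section AuxSec


namespace VsetAux

noncomputable def f (E : Set ℕ) (i : ℕ) : ℝ := E.indicator (fun i => ((2:ℝ)^(i+1))⁻¹) i

lemma f_nonneg (E : Set ℕ) (i : ℕ) : 0 ≤ f E i :=
  Set.indicator_nonneg (fun a _ => by positivity) i

lemma f_le (E : Set ℕ) (i : ℕ) : f E i ≤ ((2:ℝ)^(i+1))⁻¹ :=
  Set.indicator_le_self' (fun a _ => by positivity) i

lemma summable_aux : Summable (fun i : ℕ => ((2:ℝ)^(i+1))⁻¹) := by
  have h : Summable (fun i : ℕ => (2:ℝ)⁻¹ ^ i) :=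
    summable_geometric_of_lt_one (by norm_num) (by norm_num)
  have h2 := h.mul_left (2:ℝ)⁻¹
  refine h2.congr (fun i => ?_)
  rw [← inv_pow, pow_succ]
  ring

lemma summable_f (E : Set ℕ) : Summable (f E) :=
  Summable.of_nonneg_of_le (f_nonneg E) (f_le E) summable_aux

noncomputable def om (E : Set ℕ) : ℝ := ∑' i, f E i

lemma om_nonneg (E : Set ℕ) : 0 ≤ om E := tsum_nonneg (f_nonneg E)

lemma om_mono {E E' : Set ℕ} (h : E ⊆ E') : om E ≤ om E' :=
  Summable.tsum_le_tsum (fun i => Set.indicator_le_indicator_of_subset h (fun a => by positivity) i)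
    (summable_f E) (summable_f E')

lemma om_union {E₁ E₂ : Set ℕ} (h : Disjoint E₁ E₂) : om (E₁ ∪ E₂) = om E₁ + om E₂ := by
  unfold om
  rw [← Summable.tsum_add (summable_f E₁) (summable_f E₂)]
  congr 1
  ext i
  exact congrFun (Set.indicator_union_of_disjoint h _) i

lemma om_univ : om (Set.univ : Set ℕ) = 1 := by
  unfold om f
  simp only [Set.indicator_univ]
  have h : ∀ i : ℕ, ((2:ℝ)^(i+1))⁻¹ = (2:ℝ)⁻¹ * (2:ℝ)⁻¹ ^ i := by
    intro i; rw [← inv_pow, pow_succ]; ring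
  simp only [h]
  rw [tsum_mul_left, tsum_geometric_of_lt_one (by norm_num) (by norm_num)]
  norm_num

lemma om_le_one (E : Set ℕ) : om E ≤ 1 := by
  calc om E ≤ om Set.univ := om_mono (Set.subset_univ E)
  _ = 1 := om_univ

lemma om_singleton (j : ℕ) : om {j} = ((2:ℝ)^(j+1))⁻¹ := by
  unfold om
  rw [tsum_eq_single j]
  · simp [f]
  · intro b hb; simp [f, Set.indicator_of_notMem, hb]

lemma om_single_le {E : Set ℕ} {j : ℕ} (hj : j ∈ E) : ((2:ℝ)^(j+1))⁻¹ ≤ om E := by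
  have := Summable.le_tsum (summable_f E) j (fun i _ => f_nonneg E i)
  simpa [om, f, Set.indicator_of_mem hj] using this

lemma om_pos {E : Set ℕ} (h : E.Nonempty) : 0 < om E := by
  obtain ⟨j, hj⟩ := h
  calc (0:ℝ) < ((2:ℝ)^(j+1))⁻¹ := by positivity
  _ ≤ om E := om_single_le hj

lemma om_lt_one {E : Set ℕ} {j : ℕ} (hj : j ∉ E) : om E < 1 := by
  have hd : Disjoint E {j} := Set.disjoint_singleton_right.mpr hj
  have h1 : om E + om {j} = om (E ∪ {j}) := (om_union hd).symm
  have h2 : om (E ∪ {j}) ≤ 1 := om_le_one _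
  have h3 : (0:ℝ) < om {j} := by rw [om_singleton]; positivity
  linarith

end VsetAux

namespace VsetAux


noncomputable def natPre (E : Set ℕ) : ℕ → ℤ
  | 0 => 0
  | (i+1) => 2 * natPre E i + E.indicator (fun _ => (1:ℤ)) i

def shiftE (E : Set ℕ) (i : ℕ) : Set ℕ := {j | i + j ∈ E}

lemma shiftE_zero (E : Set ℕ) : shiftE E 0 = E := by ext j; simp [shiftE]

lemma shiftE_shiftE (E : Set ℕ) (i : ℕ) : shiftE (shiftE E i) 1 = shiftE E (i+1) := by
  ext j; simp only [shiftE, Set.mem_setOf_eq]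
  rw [show i + (1 + j) = (i+1) + j by omega]

lemma zero_mem_shiftE (E : Set ℕ) (i : ℕ) : 0 ∈ shiftE E i ↔ i ∈ E := by simp [shiftE]

lemma om_shift (E : Set ℕ) :
    2 * om E = E.indicator (fun _ => (1:ℝ)) 0 + om (shiftE E 1) := by
  have h0 : om E = f E 0 + ∑' j, f E (j+1) := Summable.tsum_eq_zero_add (summable_f E)
  have hshift : ∀ j : ℕ, 2 * f E (j+1) = f (shiftE E 1) j := by
    intro j
    by_cases hj : (j+1) ∈ E
    · have hj' : j ∈ shiftE E 1 := by simp [shiftE, Nat.add_comm 1 j, hj]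
      simp only [f, Set.indicator_of_mem hj, Set.indicator_of_mem hj']
      rw [pow_succ]
      field_simp
    · have hj' : j ∉ shiftE E 1 := by simp [shiftE, Nat.add_comm 1 j, hj]
      simp [f, Set.indicator_of_notMem hj, Set.indicator_of_notMem hj']
  have h2 : 2 * f E 0 = E.indicator (fun _ => (1:ℝ)) 0 := by
    by_cases h : 0 ∈ E
    · simp only [f, Set.indicator_of_mem h]
      norm_num
    · simp [f, Set.indicator_of_notMem h]
  calc 2 * om E = 2 * f E 0 + 2 * ∑' j, f E (j+1) := by rw [h0]; ring
  _ = E.indicator (fun _ => (1:ℝ)) 0 + ∑' j, 2 * f E (j+1) := by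
      rw [h2, ← tsum_mul_left]
  _ = E.indicator (fun _ => (1:ℝ)) 0 + om (shiftE E 1) := by
      congr 1
      unfold om
      exact tsum_congr hshift

lemma om_spec (E : Set ℕ) : ∀ i : ℕ, (2:ℝ)^i * om E = (natPre E i : ℝ) + om (shiftE E i)
  | 0 => by simp [natPre, shiftE_zero]
  | (i+1) => by
      have ih := om_spec E i
      have h1 : (2:ℝ)^(i+1) * om E = 2 * ((2:ℝ)^i * om E) := by ring
      rw [h1, ih]
      have h2 : 2 * om (shiftE E i) =
          (shiftE E i).indicator (fun _ => (1:ℝ)) 0 + om (shiftE E (i+1)) := by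
        rw [om_shift, shiftE_shiftE]
      have h3 : (shiftE E i).indicator (fun _ => (1:ℝ)) 0 =
          ((E.indicator (fun _ => (1:ℤ)) i : ℤ) : ℝ) := by
        by_cases h : i ∈ E
        · rw [Set.indicator_of_mem ((zero_mem_shiftE E i).mpr h), Set.indicator_of_mem h]
          norm_num
        · rw [Set.indicator_of_notMem (fun hc => h ((zero_mem_shiftE E i).mp hc)),
            Set.indicator_of_notMem h]
          norm_num
      have h4 : natPre E (i+1) = 2 * natPre E i + E.indicator (fun _ => (1:ℤ)) i := rfl
      rw [h4]
      push_cast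
      rw [mul_add, h2, h3]
      ring

lemma shiftE_nonempty {E : Set ℕ} (hE : E.Infinite) (i : ℕ) : (shiftE E i).Nonempty := by
  obtain ⟨j, hjE, hji⟩ := hE.exists_gt i
  exact ⟨j - i, by simp only [shiftE, Set.mem_setOf_eq]; rwa [show i + (j - i) = j by omega]⟩

lemma shiftE_not_univ {E : Set ℕ} (hE : Eᶜ.Infinite) (i : ℕ) : ∃ j, j ∉ shiftE E i := by
  obtain ⟨j, hjE, hji⟩ := hE.exists_gt i
  exact ⟨j - i, by simp only [shiftE, Set.mem_setOf_eq]; rwa [show i + (j - i) = j by omega]⟩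

lemma om_shiftE_mem_Ioc {E : Set ℕ} (hE : E.Infinite) (i : ℕ) :
    0 < om (shiftE E i) ∧ om (shiftE E i) ≤ 1 :=
  ⟨om_pos (shiftE_nonempty hE i), om_le_one _⟩

lemma ceil_om {E : Set ℕ} (hE : E.Infinite) (i : ℕ) :
    ⌈(2:ℝ)^i * om E⌉ = natPre E i + 1 := by
  rw [om_spec E i]
  obtain ⟨h0, h1⟩ := om_shiftE_mem_Ioc hE i
  rw [add_comm, Int.ceil_add_intCast]
  have : ⌈om (shiftE E i)⌉ = 1 := by
    rw [Int.ceil_eq_iff]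
    refine ⟨by push_cast; linarith, by push_cast; linarith⟩
  omega

lemma digit_om {E : Set ℕ} (hE : E.Infinite) (i : ℕ) :
    dyadicDigit (om E) i = E.indicator (fun _ => (1:ℤ)) i := by
  unfold dyadicDigit
  rw [ceil_om hE (i+1), ceil_om hE i,
    show natPre E (i+1) = 2 * natPre E i + E.indicator (fun _ => (1:ℤ)) i from rfl]
  ring

lemma ones_om {E : Set ℕ} (hE : E.Infinite) : {i | dyadicDigit (om E) i = 1} = E := by
  ext i
  simp only [Set.mem_setOf_eq, digit_om hE]
  by_cases h : i ∈ E <;> simp [h]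

lemma digit01 (ω : ℝ) (i : ℕ) : dyadicDigit ω i = 0 ∨ dyadicDigit ω i = 1 := by
  have h1 : ⌈(2:ℝ)^(i+1) * ω⌉ ≤ 2 * ⌈(2:ℝ)^i * ω⌉ := by
    rw [Int.ceil_le]
    push_cast
    have h := Int.le_ceil ((2:ℝ)^i * ω)
    rw [pow_succ]
    nlinarith [h]
  have h2 : 2 * ⌈(2:ℝ)^i * ω⌉ - 2 < ⌈(2:ℝ)^(i+1) * ω⌉ := by
    rw [Int.lt_ceil]
    push_cast
    have h := Int.ceil_lt_add_one ((2:ℝ)^i * ω)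
    rw [pow_succ]
    nlinarith [h]
  unfold dyadicDigit
  omega

lemma ones_infinite (ω : ℝ) : {i | dyadicDigit ω i = 1}.Infinite := by
  by_contra h
  rw [Set.not_infinite] at h
  obtain ⟨b, hb⟩ := h.bddAbove
  have hM0 : ∀ i, b + 1 ≤ i → dyadicDigit ω i = 0 := by
    intro i hi
    refine (digit01 ω i).resolve_right (fun hc => ?_)
    have := hb hc
    omega
  set M := b + 1 with hM
  have key : ∀ t : ℕ, ⌈(2:ℝ)^(M+t) * ω⌉ = 2^t * (⌈(2:ℝ)^M * ω⌉ - 1) + 1 := by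
    intro t
    induction t with
    | zero => simp
    | succ t ih =>
      have hd := hM0 (M+t) (by omega)
      unfold dyadicDigit at hd
      rw [show M + (t+1) = (M+t)+1 by omega,
        show ⌈(2:ℝ)^((M+t)+1) * ω⌉ = 2*⌈(2:ℝ)^(M+t)*ω⌉ - 1 from by omega, ih]
      ring
  set c := ⌈(2:ℝ)^M * ω⌉ with hc
  have hlt : ((c:ℝ) - 1) < (2:ℝ)^M * ω := by
    have := Int.ceil_lt_add_one ((2:ℝ)^M * ω)
    rw [← hc] at this
    linarith
  set a := (2:ℝ)^M * ω - ((c:ℝ) - 1) with ha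
  have hapos : 0 < a := by simp only [ha]; linarith
  obtain ⟨t, ht⟩ := pow_unbounded_of_one_lt (a⁻¹) (by norm_num : (1:ℝ) < 2)
  have hle : (2:ℝ)^(M+t) * ω ≤ ((2^t * (c - 1) + 1 : ℤ) : ℝ) := by
    rw [show ((2^t * (c - 1) + 1 : ℤ) : ℝ) = ((⌈(2:ℝ)^(M+t) * ω⌉ : ℤ) : ℝ) from by
      rw [key t]]
    exact Int.le_ceil _
  push_cast at hle
  rw [pow_add] at hle
  have h2t : (0:ℝ) < 2^t := by positivity
  have hb1 : (2:ℝ)^t * a ≤ 1 := by nlinarith [hle]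
  have hb2 : (1:ℝ) < 2^t * a := by
    have e2 : a * a⁻¹ = 1 := mul_inv_cancel₀ (ne_of_gt hapos)
    nlinarith [ht, hapos]
  linarith

lemma ceil_of_between {z : ℝ} {n : ℤ} (h1 : (n:ℝ) < z) (h2 : z ≤ n + 1) : ⌈z⌉ = n + 1 := by
  rw [Int.ceil_eq_iff]
  constructor
  · push_cast; linarith
  · push_cast; linarith

lemma natPre_ones {ω : ℝ} (hω : ω ∈ Set.Ioc (0:ℝ) 1) :
    ∀ i, natPre {i | dyadicDigit ω i = 1} i = ⌈(2:ℝ)^i * ω⌉ - 1 := by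
  intro i
  induction i with
  | zero =>
    have h1 : ⌈(2:ℝ)^(0:ℕ) * ω⌉ = 1 := by
      rw [pow_zero, one_mul]
      have := ceil_of_between (n := 0) (z := ω) (by simpa using hω.1) (by simpa using hω.2)
      simpa using this
    rw [h1]
    rfl
  | succ i ih =>
    have hind : ({i | dyadicDigit ω i = 1}).indicator (fun _ => (1:ℤ)) i = dyadicDigit ω i := by
      by_cases h : dyadicDigit ω i = 1
      · rw [Set.indicator_of_mem (show i ∈ {i | dyadicDigit ω i = 1} from h)]
        exact h.symm
      · rw [Set.indicator_of_notMem (show i ∉ {i | dyadicDigit ω i = 1} from h)]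
        exact ((digit01 ω i).resolve_right h).symm
    rw [show natPre {i | dyadicDigit ω i = 1} (i+1)
        = 2 * natPre {i | dyadicDigit ω i = 1} i
          + ({i | dyadicDigit ω i = 1}).indicator (fun _ => (1:ℤ)) i from rfl,
      ih, hind]
    unfold dyadicDigit
    ring

lemma decode {ω : ℝ} (hω : ω ∈ Set.Ioc (0:ℝ) 1) :
    om {i | dyadicDigit ω i = 1} = ω := by
  set E := {i | dyadicDigit ω i = 1} with hE
  have hEinf : E.Infinite := ones_infinite ω
  have key : ∀ i : ℕ, |om E - ω| ≤ ((2:ℝ)^i)⁻¹ := by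
    intro i
    have h1 := om_spec E i
    obtain ⟨ha, hb⟩ := om_shiftE_mem_Ioc hEinf i
    have hnp := natPre_ones hω i
    have hc1 : ((⌈(2:ℝ)^i * ω⌉ : ℤ) : ℝ) - 1 < (2:ℝ)^i * ω := by
      have := Int.ceil_lt_add_one ((2:ℝ)^i * ω)
      linarith
    have hc2 : (2:ℝ)^i * ω ≤ ((⌈(2:ℝ)^i * ω⌉ : ℤ) : ℝ) := Int.le_ceil _
    have h2 : (2:ℝ)^i * om E ≤ ((⌈(2:ℝ)^i * ω⌉:ℤ) : ℝ) := by
      rw [h1, hnp]; push_cast; linarith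
    have h3 : ((⌈(2:ℝ)^i * ω⌉:ℤ):ℝ) - 1 < (2:ℝ)^i * om E := by
      rw [h1, hnp]; push_cast; linarith
    have h2i : (0:ℝ) < 2^i := by positivity
    have e1 : (2:ℝ)^i * ((2:ℝ)^i)⁻¹ = 1 := mul_inv_cancel₀ (ne_of_gt h2i)
    rw [abs_le]
    constructor
    · nlinarith
    · nlinarith
  by_contra hne
  have habs : 0 < |om E - ω| := abs_pos.mpr (sub_ne_zero.mpr hne)
  obtain ⟨i, hi⟩ := pow_unbounded_of_one_lt (|om E - ω|⁻¹) (by norm_num : (1:ℝ) < 2)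
  have hk := key i
  have h2i : (0:ℝ) < 2^i := by positivity
  have e1 : (2:ℝ)^i * ((2:ℝ)^i)⁻¹ = 1 := mul_inv_cancel₀ (ne_of_gt h2i)
  have e2 : |om E - ω| * |om E - ω|⁻¹ = 1 := mul_inv_cancel₀ (ne_of_gt habs)
  nlinarith

lemma natPre_eq_zero (E : Set ℕ) : ∀ i : ℕ, (∀ j, j < i → j ∉ E) → natPre E i = 0
  | 0, _ => rfl
  | (i+1), h => by
      have h1 := natPre_eq_zero E i (fun j hj => h j (by omega))
      show 2 * natPre E i + E.indicator (fun _ => (1:ℤ)) i = 0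
      rw [h1, Set.indicator_of_notMem (h i (by omega))]
      ring

lemma om_Ici (p : ℕ) : om (Set.Ici p) = ((2:ℝ)^p)⁻¹ := by
  have h := om_spec (Set.Ici p) p
  have h1 : natPre (Set.Ici p) p = 0 :=
    natPre_eq_zero _ p (fun j hj hc => by simp only [Set.mem_Ici] at hc; omega)
  have h2 : shiftE (Set.Ici p) p = Set.univ := by
    ext j; simp [shiftE, Set.mem_Ici]
  rw [h1, h2, om_univ] at h
  have h2p : ((2:ℝ)^p) ≠ 0 := by positivity
  field_simp at h ⊢
  push_cast at h
  linarith [h]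

lemma om_le_of_subset_Ici {E : Set ℕ} {p : ℕ} (h : E ⊆ Set.Ici p) :
    om E ≤ ((2:ℝ)^p)⁻¹ :=
  (om_mono h).trans (om_Ici p).le

lemma digit_eq_of_ceil (ω' : ℝ) (E : Set ℕ) (i : ℕ)
    (h1 : ⌈(2:ℝ)^i * ω'⌉ = natPre E i + 1)
    (h2 : ⌈(2:ℝ)^(i+1) * ω'⌉ = natPre E (i+1) + 1) :
    dyadicDigit ω' i = E.indicator (fun _ => (1:ℤ)) i := by
  unfold dyadicDigit
  rw [h1, h2,
    show natPre E (i+1) = 2 * natPre E i + E.indicator (fun _ => (1:ℤ)) i from rfl]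
  ring

lemma partFin {P : ℕ → Set ℕ} (hP : IsFinPartition P) (c : ℕ) :
    {n | (P n ∩ Set.Iio c).Nonempty}.Finite := by
  have hsub : {n | (P n ∩ Set.Iio c).Nonempty} ⊆ ⋃ j ∈ Set.Iio c, {n | j ∈ P n} := by
    rintro n ⟨j, hjP, hjc⟩
    exact Set.mem_biUnion hjc hjP
  refine Set.Finite.subset (Set.Finite.biUnion (Set.finite_Iio c) (fun j _ => ?_)) hsub
  refine Set.Subsingleton.finite (fun n₁ h₁ n₂ h₂ => ?_)
  by_contra hne
  exact Set.disjoint_left.mp (hP.2.2 hne) h₁ h₂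

open scoped ENNReal in
lemma le_of_forall_sub {q L : ℝ≥0∞} (hq : q ≠ ⊤)
    (h : ∀ j : ℕ, q - ((j:ℝ≥0∞)+1)⁻¹ ≤ L) : q ≤ L := by
  have h' : ∀ j : ℕ, q ≤ L + ((j:ℝ≥0∞)+1)⁻¹ := fun j => tsub_le_iff_right.mp (h j)
  have hten : Filter.Tendsto (fun j : ℕ => ((j:ℝ≥0∞)+1)⁻¹) Filter.atTop (nhds 0) := by
    have h3 := ENNReal.tendsto_inv_nat_nhds_zero.comp (Filter.tendsto_add_atTop_nat 1)
    have he : (fun j : ℕ => ((j:ℝ≥0∞)+1)⁻¹)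
        = (fun n : ℕ => (n:ℝ≥0∞)⁻¹) ∘ (fun n : ℕ => n + 1) := by
      funext j
      simp only [Function.comp_apply]
      norm_cast
    rw [he]
    exact h3
  have hten2 := Filter.Tendsto.add (tendsto_const_nhds (x := L)) hten
  rw [add_zero] at hten2
  exact ge_of_tendsto' hten2 h'

end VsetAux

end AuxSec

/-- The set `V_ℓ(x;q)` is either comeager in `(0,1]` or empty. -/
theorem Vset_comeager_or_empty {X : Type*} [TopologicalSpace X]
    [FirstCountableTopology X]
    (x : ℕ → X) (P : ℕ → Set ℕ) (μ : ℕ → Set ℕ → ℝ≥0∞)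
    (hP : IsFinPartition P) (hμ : ∀ n, IsSubmeasureOn (μ n))
    (hconc : ∀ n A, μ n A = μ n (A ∩ P n))
    (q : ℝ≥0∞) (hq0 : 0 < q) (hq : q < Filter.limsup (fun n => μ n (P n)) atTop)
    (l : X) (U : ℕ → Set X) (hU : (𝓝 l).HasBasis (fun _ : ℕ => True) U)
    (hUanti : Antitone U) :
    IsMeagre {ω : Set.Ioc (0:ℝ) 1 | ¬ ∀ m : ℕ,
        q ≤ Filter.limsup (fun n => μ n ({k | subseq x ↑ω k ∈ U m} ∩ P n)) atTop} ∨
    {ω : Set.Ioc (0:ℝ) 1 | ∀ m : ℕ,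
        q ≤ Filter.limsup (fun n => μ n ({k | subseq x ↑ω k ∈ U m} ∩ P n)) atTop} = ∅ := by
  classical
  by_cases hBig : ∀ m : ℕ, {i | x i ∈ U m}.Infinite
  · -- all U m hit infinitely often: the complement of V is meagre
    left
    have hqtop : q ≠ ⊤ := hq.ne_top
    set r : ℕ → ℝ≥0∞ := fun j => q - ((j:ℝ≥0∞)+1)⁻¹ with hr
    have hrlt : ∀ j, r j < q := by
      intro j
      refine ENNReal.sub_lt_self hqtop hq0.ne' ?_
      simp
    set S : ℕ → ℕ → ℕ → Set (Set.Ioc (0:ℝ) 1) := fun m N j =>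
      {ω | ∃ n, N ≤ n ∧ r j < μ n ({k | subseq x (↑ω) k ∈ U m} ∩ P n)} with hSdef
    have hSres : ∀ m N j, S m N j ∈ residual (Set.Ioc (0:ℝ) 1) := by
      intro m N j
      refine Filter.mem_of_superset (residual_of_dense_open isOpen_interior ?_) interior_subset
      rw [dense_iff_inter_open]
      rintro J hJopen ⟨ω₀, hω₀J⟩
      obtain ⟨V, hVopen, hVeq⟩ := isOpen_induced_iff.mp hJopen
      have hω₀V : (ω₀ : ℝ) ∈ V := by
        rw [← hVeq] at hω₀J
        exact hω₀J
      obtain ⟨δ, hδpos, hball⟩ := Metric.isOpen_iff.mp hVopen _ hω₀V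
      obtain ⟨p, hp⟩ := pow_unbounded_of_one_lt (δ⁻¹) (by norm_num : (1:ℝ) < 2)
      have h2p : (0:ℝ) < 2^p := by positivity
      have hpδ : ((2:ℝ)^p)⁻¹ < δ := by
        have e1 : δ * δ⁻¹ = 1 := mul_inv_cancel₀ (ne_of_gt hδpos)
        have e2 : (2:ℝ)^p * ((2:ℝ)^p)⁻¹ = 1 := mul_inv_cancel₀ (ne_of_gt h2p)
        nlinarith
      set E₀ : Set ℕ := {i | dyadicDigit (ω₀:ℝ) i = 1} ∩ Set.Iio p with hE₀
      set c' : ℕ := ((Finset.range p).filter (fun i => dyadicDigit (ω₀:ℝ) i = 1)).card with hc'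
      obtain ⟨b, hb⟩ := (VsetAux.partFin hP c').bddAbove
      set N' : ℕ := max N (b+1) with hN'
      have hlim : q < ⨆ n, ⨆ (_ : N' ≤ n), μ n (P n) := by
        refine lt_of_lt_of_le hq ?_
        rw [Filter.limsup_eq_iInf_iSup_of_nat]
        exact iInf_le _ N'
      rw [lt_iSup_iff] at hlim
      obtain ⟨n₀, hlim⟩ := hlim
      rw [lt_iSup_iff] at hlim
      obtain ⟨hn₀N', hqn₀⟩ := hlim
      have hPfin := (hP.1 n₀).1
      have hPne := (hP.1 n₀).2
      have hPlow : ∀ k ∈ P n₀, c' ≤ k := by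
        intro k hk
        by_contra hlt
        have hmem : n₀ ∈ {n | (P n ∩ Set.Iio c').Nonempty} := ⟨k, hk, Set.mem_Iio.mpr (by omega)⟩
        have h1 := hb hmem
        have h2 : b + 1 ≤ n₀ := le_trans (le_max_right _ _) hn₀N'
        omega
      obtain ⟨K, hK⟩ := hPfin.bddAbove
      set B' : Set ℕ := {i | x i ∈ U m ∧ p ≤ i} with hB'
      have hB'inf : B'.Infinite := by
        refine Set.Infinite.mono ?_ ((hBig m).diff (Set.finite_Iio p))
        rintro i ⟨h1, h2⟩
        exact ⟨h1, by simpa using h2⟩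
      set g : ℕ → ℕ := Nat.nth (· ∈ B') with hg
      have hginf : (setOf (· ∈ B')).Infinite := by exact hB'inf
      have hgmono : StrictMono g := Nat.nth_strictMono hginf
      have hgmem : ∀ k, g k ∈ B' := fun k => Nat.nth_mem_of_infinite hginf k
      have hgp : ∀ k, p ≤ g k := fun k => (hgmem k).2
      set t : ℕ := K - c' with ht
      set M₀ : ℕ := g t with hM₀
      set T : Set ℕ := {i | M₀ < i ∧ Even i} with hT
      set E : Set ℕ := E₀ ∪ (g '' Set.Iic t ∪ T) with hE
      have hTinf : T.Infinite := by
        refine Set.infinite_of_injective_forall_mem (f := fun n : ℕ => 2*n + 2*M₀ + 2) ?_ ?_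
        · intro a b hab
          simp only at hab
          omega
        · intro a
          show M₀ < 2*a + 2*M₀ + 2 ∧ Even (2*a + 2*M₀ + 2)
          exact ⟨by omega, ⟨a + M₀ + 1, by ring⟩⟩
      have hEinf : E.Infinite := Set.Infinite.mono (fun i hi => Or.inr (Or.inr hi)) hTinf
      have hEodd : ∀ i, M₀ < i → ¬ Even i → i ∉ E := by
        intro i h1 h2 hi
        rcases hi with h | h | h
        · have hip : i < p := h.2
          have := hgp t
          omega
        · obtain ⟨j₂, hj₂, rfl⟩ := h
          have := hgmono.monotone hj₂
          omega
        · exact h2 h.2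
      have hEcoinf : Eᶜ.Infinite := by
        refine Set.infinite_of_injective_forall_mem (f := fun n : ℕ => 2*n + 2*M₀ + 1) ?_ ?_
        · intro a b hab
          simp only at hab
          omega
        · intro a
          show 2*a + 2*M₀ + 1 ∈ Eᶜ
          refine hEodd _ (by omega) ?_
          rintro ⟨rr, hrr⟩
          omega
      set ω₁ : ℝ := VsetAux.om E with hω₁
      have hRp : (g '' Set.Iic t ∪ T) ⊆ Set.Ici p := by
        rintro i (⟨j₂, _, rfl⟩ | hiT)
        · exact hgp j₂
        · exact le_trans (hgp t) (le_of_lt hiT.1)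
      have hdisj : Disjoint E₀ (g '' Set.Iic t ∪ T) := by
        rw [Set.disjoint_left]
        intro i hi1 hi2
        have h1 : i < p := hi1.2
        have h2 : p ≤ i := hRp hi2
        omega
      have hom1 : ω₁ = VsetAux.om E₀ + VsetAux.om (g '' Set.Iic t ∪ T) := by
        rw [hω₁, hE]
        exact VsetAux.om_union hdisj
      have hdisj0 : Disjoint E₀ ({i | dyadicDigit (ω₀:ℝ) i = 1} ∩ Set.Ici p) := by
        rw [Set.disjoint_left]
        intro i hi1 hi2
        have h1 : i < p := hi1.2
        have h2 : p ≤ i := hi2.2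
        omega
      have hdec : (ω₀:ℝ) = VsetAux.om E₀ + VsetAux.om ({i | dyadicDigit (ω₀:ℝ) i = 1} ∩ Set.Ici p) := by
        conv_lhs => rw [← VsetAux.decode ω₀.2]
        rw [← VsetAux.om_union hdisj0]
        congr 1
        ext i
        constructor
        · intro hi
          by_cases hip : i < p
          · exact Or.inl ⟨hi, Set.mem_Iio.mpr hip⟩
          · exact Or.inr ⟨hi, Set.mem_Ici.mpr (by omega)⟩
        · rintro (h | h) <;> exact h.1
      have hdist : dist ω₁ (ω₀:ℝ) < δ := by
        rw [Real.dist_eq, hom1, hdec]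
        have b1 : 0 ≤ VsetAux.om (g '' Set.Iic t ∪ T) := VsetAux.om_nonneg _
        have b2 := VsetAux.om_le_of_subset_Ici hRp
        have b3 : 0 ≤ VsetAux.om ({i | dyadicDigit (ω₀:ℝ) i = 1} ∩ Set.Ici p) := VsetAux.om_nonneg _
        have b4 := VsetAux.om_le_of_subset_Ici
          (Set.inter_subset_right (s := {i | dyadicDigit (ω₀:ℝ) i = 1}) (t := Set.Ici p))
        have he : VsetAux.om E₀ + VsetAux.om (g '' Set.Iic t ∪ T)
            - (VsetAux.om E₀ + VsetAux.om ({i | dyadicDigit (ω₀:ℝ) i = 1} ∩ Set.Ici p))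
            = VsetAux.om (g '' Set.Iic t ∪ T)
              - VsetAux.om ({i | dyadicDigit (ω₀:ℝ) i = 1} ∩ Set.Ici p) := by ring
        rw [he, abs_lt]
        constructor <;> linarith
      have hω₁Ioc : ω₁ ∈ Set.Ioc (0:ℝ) 1 := by
        constructor
        · exact VsetAux.om_pos ⟨g 0, Or.inr (Or.inl ⟨0, Set.mem_Iic.mpr (Nat.zero_le t), rfl⟩)⟩
        · exact VsetAux.om_le_one E
      set W : Set ℝ := ⋂ i ∈ Finset.range (M₀ + 2),
          ({ω' : ℝ | (VsetAux.natPre E i : ℝ) < 2^i * ω'}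
            ∩ {ω' : ℝ | 2^i * ω' < VsetAux.natPre E i + 1}) with hW
      have hWopen : IsOpen W := by
        refine isOpen_biInter_finset (fun i _ => IsOpen.inter ?_ ?_)
        · exact isOpen_lt continuous_const (continuous_const.mul continuous_id)
        · exact isOpen_lt (continuous_const.mul continuous_id) continuous_const
      have hω₁W : ω₁ ∈ W := by
        rw [hW]
        simp only [Set.mem_iInter]
        intro i _
        have h1 := VsetAux.om_spec E i
        have h2 : 0 < VsetAux.om (VsetAux.shiftE E i) :=
          VsetAux.om_pos (VsetAux.shiftE_nonempty hEinf i)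
        obtain ⟨jj, hjj⟩ := VsetAux.shiftE_not_univ hEcoinf i
        have h3 : VsetAux.om (VsetAux.shiftE E i) < 1 := VsetAux.om_lt_one hjj
        constructor
        · show (VsetAux.natPre E i : ℝ) < 2^i * ω₁
          rw [hω₁, h1]
          linarith
        · show 2^i * ω₁ < (VsetAux.natPre E i : ℝ) + 1
          rw [hω₁, h1]
          linarith
      have hceil : ∀ ω' ∈ W, ∀ i, i ≤ M₀ + 1 → ⌈(2:ℝ)^i * ω'⌉ = VsetAux.natPre E i + 1 := by
        intro ω' hω' i hi
        rw [hW] at hω'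
        simp only [Set.mem_iInter] at hω'
        have := hω' i (Finset.mem_range.mpr (by omega))
        exact VsetAux.ceil_of_between this.1 this.2.le
      have hdig' : ∀ ω' ∈ W, ∀ i, i ≤ M₀ → dyadicDigit ω' i = E.indicator (fun _ => (1:ℤ)) i := by
        intro ω' hω' i hi
        exact VsetAux.digit_eq_of_ceil ω' E i (hceil ω' hω' i (by omega)) (hceil ω' hω' (i+1) (by omega))
      have hnth : ∀ ω' ∈ W, ∀ k ∈ P n₀,
          Nat.nth (fun i => dyadicDigit ω' i = 1) k = g (k - c') := by
        intro ω' hω' k hk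
        set j' : ℕ := k - c' with hj'
        have hkc : c' ≤ k := hPlow k hk
        have hkK : k ≤ K := hK hk
        have hj't : j' ≤ t := by omega
        have hgj'M : g j' ≤ M₀ := hgmono.monotone hj't
        set pred' := fun i => dyadicDigit ω' i = 1 with hpred'
        have hpredE : ∀ i, i ≤ M₀ → (pred' i ↔ i ∈ E) := by
          intro i hi
          have hd := hdig' ω' hω' i hi
          by_cases h : i ∈ E
          · rw [Set.indicator_of_mem h] at hd
            simp [hpred', hd, h]
          · rw [Set.indicator_of_notMem h] at hd
            simp [hpred', hd, h]
        have hmemE : g j' ∈ E := Or.inr (Or.inl ⟨j', hj't, rfl⟩)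
        have hpgj' : pred' (g j') := (hpredE _ hgj'M).mpr hmemE
        have hcount : Nat.count pred' (g j') = k := by
          rw [Nat.count_eq_card_filter_range]
          have hfdisj : Disjoint ((Finset.range p).filter (fun i => dyadicDigit (ω₀:ℝ) i = 1))
              ((Finset.range j').image g) := by
            rw [Finset.disjoint_left]
            rintro i hi1 hi2
            simp only [Finset.mem_filter, Finset.mem_range] at hi1
            simp only [Finset.mem_image, Finset.mem_range] at hi2
            obtain ⟨j₂, _, rfl⟩ := hi2
            have := hgp j₂
            omega
          have hfe : (Finset.range (g j')).filter pred' =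
              ((Finset.range p).filter (fun i => dyadicDigit (ω₀:ℝ) i = 1))
                ∪ (Finset.range j').image g := by
            ext i
            simp only [Finset.mem_filter, Finset.mem_range, Finset.mem_union, Finset.mem_image]
            constructor
            · rintro ⟨hilt, hpi⟩
              have hiE : i ∈ E := (hpredE i (by omega)).mp hpi
              rcases hiE with h | h | h
              · exact Or.inl ⟨h.2, h.1⟩
              · obtain ⟨j₂, hj₂, rfl⟩ := h
                exact Or.inr ⟨j₂, hgmono.lt_iff_lt.mp hilt, rfl⟩
              · exfalso
                have h1 : M₀ < i := h.1
                omega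
            · rintro (⟨hip, hd⟩ | ⟨j₂, hj₂, rfl⟩)
              · have hiE : i ∈ E := Or.inl ⟨hd, hip⟩
                have hilt : i < g j' := by
                  have := hgp j'
                  omega
                exact ⟨hilt, (hpredE i (by omega)).mpr hiE⟩
              · have hj₂t : j₂ ≤ t := by omega
                have hiE : g j₂ ∈ E := Or.inr (Or.inl ⟨j₂, hj₂t, rfl⟩)
                have hlt : g j₂ < g j' := hgmono (by omega)
                have hle : g j₂ ≤ M₀ := hgmono.monotone hj₂t
                exact ⟨hlt, (hpredE _ (by omega)).mpr hiE⟩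
          rw [hfe, Finset.card_union_of_disjoint hfdisj,
            Finset.card_image_of_injective _ hgmono.injective, Finset.card_range, ← hc']
          omega
        have hfin := Nat.nth_count (p := pred') hpgj'
        rw [hcount] at hfin
        exact hfin
      refine ⟨⟨ω₁, hω₁Ioc⟩, ?_, ?_⟩
      · rw [← hVeq]
        exact hball (Metric.mem_ball.mpr hdist)
      · rw [mem_interior]
        refine ⟨Subtype.val ⁻¹' W, ?_, continuous_subtype_val.isOpen_preimage W hWopen, hω₁W⟩
        intro ω' hω'
        refine ⟨n₀, le_trans (le_max_left _ _) hn₀N', ?_⟩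
        have hsubset : P n₀ ⊆ {k | subseq x (↑ω') k ∈ U m} ∩ P n₀ := by
          intro k hk
          refine ⟨?_, hk⟩
          show x (Nat.nth (fun i => dyadicDigit (↑ω' : ℝ) i = 1) k) ∈ U m
          rw [hnth (↑ω') hω' k hk]
          exact (hgmem _).1
        calc r j < q := hrlt j
        _ < μ n₀ (P n₀) := hqn₀
        _ = μ n₀ (P n₀ ∩ P n₀) := by rw [Set.inter_self]
        _ ≤ μ n₀ ({k | subseq x (↑ω') k ∈ U m} ∩ P n₀) := by
            refine (hμ n₀).2.1 ?_
            intro a ha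
            exact ⟨(hsubset ha.1).1, ha.2⟩
    have hsub : {ω : Set.Ioc (0:ℝ) 1 | ¬ ∀ m : ℕ,
        q ≤ Filter.limsup (fun n => μ n ({k | subseq x ↑ω k ∈ U m} ∩ P n)) Filter.atTop}
        ⊆ ⋃ m, ⋃ N, ⋃ j, (S m N j)ᶜ := by
      intro ω hω
      simp only [Set.mem_setOf_eq] at hω
      push_neg at hω
      obtain ⟨m, hm⟩ := hω
      by_contra hc
      simp only [Set.mem_iUnion, Set.mem_compl_iff, not_exists, not_not] at hc
      apply absurd ?_ hm.not_ge
      apply VsetAux.le_of_forall_sub hqtop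
      intro j
      rw [Filter.limsup_eq_iInf_iSup_of_nat]
      refine le_iInf fun N => ?_
      obtain ⟨n, hnN, hn⟩ := hc m N j
      exact le_trans hn.le (le_iSup_of_le n (le_iSup_of_le hnN le_rfl))
    refine IsMeagre.mono hsub ?_
    refine isMeagre_iUnion fun m => isMeagre_iUnion fun N => isMeagre_iUnion fun j => ?_
    rw [IsMeagre, compl_compl]
    exact hSres m N j
  · -- some U m is hit only finitely often: V is empty
    right
    push_neg at hBig
    obtain ⟨m, hm⟩ := hBig
    rw [Set.eq_empty_iff_forall_notMem]
    intro ω hω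
    have h := hω m
    have hinf : (setOf (fun i => dyadicDigit (ω : ℝ) i = 1)).Infinite :=
      VsetAux.ones_infinite (ω : ℝ)
    have hinj : Function.Injective (Nat.nth (fun i => dyadicDigit (ω : ℝ) i = 1)) :=
      (Nat.nth_strictMono hinf).injective
    have hA : {k | subseq x (↑ω) k ∈ U m}.Finite := by
      have hpre : {k | subseq x (↑ω) k ∈ U m}
          = (Nat.nth (fun i => dyadicDigit (ω : ℝ) i = 1)) ⁻¹' {i | x i ∈ U m} := rfl
      rw [hpre]
      exact Set.Finite.preimage hinj.injOn hm
    obtain ⟨K, hK⟩ := hA.bddAbove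
    obtain ⟨b, hb⟩ := (VsetAux.partFin hP (K+1)).bddAbove
    have hev : ∀ n, b + 1 ≤ n → μ n ({k | subseq x (↑ω) k ∈ U m} ∩ P n) = 0 := by
      intro n hn
      have hempty : {k | subseq x (↑ω) k ∈ U m} ∩ P n = ∅ := by
        rw [Set.eq_empty_iff_forall_notMem]
        rintro k ⟨hk1, hk2⟩
        have hkK : k ≤ K := hK hk1
        have hmem : n ∈ {n | (P n ∩ Set.Iio (K+1)).Nonempty} := ⟨k, hk2, Set.mem_Iio.mpr (by omega)⟩
        have := hb hmem
        omega
      rw [hempty]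
      exact (hμ n).1
    have hls : Filter.limsup (fun n => μ n ({k | subseq x (↑ω) k ∈ U m} ∩ P n))
        Filter.atTop = 0 := by
      have hcongr : (fun n => μ n ({k | subseq x (↑ω) k ∈ U m} ∩ P n))
          =ᶠ[Filter.atTop] (fun _ => (0:ℝ≥0∞)) :=
        Filter.eventually_atTop.mpr ⟨b+1, hev⟩
      rw [Filter.limsup_congr hcongr]
      exact Filter.limsup_const 0
    rw [hls] at h
    exact hq0.ne' (le_antisymm h (zero_le : 0 ≤ q)).symm.symm
end

section
/- Let x be a sequence in a first countable space X, Z_μ a generalized density ideal given by partition (I_n) and submeasures (μ_n), and ℓ ∈ X with decreasing local base (U_m). Then ℓ is a Z_μ-limit point of the subsequence x↾ω if and only if there exists q > 0 such that for every m, limsup_n μ_n({k : (x↾ω)_k ∈ U_m} ∩ I_n) ≥ q. -/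
open Filter Topology Set MeasureTheory
open scoped ENNReal

section AuxForMain

open Filter Topology Set
open scoped ENNReal

theorem idealLimitPt_aux {X : Type*} [TopologicalSpace X]
    (y : ℕ → X) (P : ℕ → Set ℕ) (μ : ℕ → Set ℕ → ℝ≥0∞)
    (hP : IsFinPartition P) (hμ : ∀ n, IsSubmeasureOn (μ n))
    (l : X) (U : ℕ → Set X) (hU : (𝓝 l).HasBasis (fun _ : ℕ => True) U)
    (hUanti : Antitone U) :
    IdealLimitPt (Zmu P μ) y l ↔
      ∃ q : ℝ≥0∞, 0 < q ∧ ∀ m : ℕ,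
        q ≤ Filter.limsup (fun n => μ n ({k | y k ∈ U m} ∩ P n)) atTop := by
  obtain ⟨hPfin, hPcov, hPdis⟩ := hP
  set V : ℕ → Set ℕ := fun m => {k | y k ∈ U m} with hV
  -- a finite set meets only finitely many blocks
  have hfin_empty : ∀ F : Set ℕ, F.Finite → ∀ᶠ n in atTop, F ∩ P n = ∅ := by
    intro F hF
    have h1 : ∀ᶠ n in atTop, ∀ j ∈ F, j ∉ P n := by
      rw [Filter.eventually_all_finite hF]
      intro j _
      have hj : j ∈ ⋃ n, P n := by rw [hPcov]; trivial
      obtain ⟨n₀, hn₀⟩ := Set.mem_iUnion.mp hj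
      filter_upwards [eventually_gt_atTop n₀] with n hn hjn
      exact Set.disjoint_left.mp (hPdis hn.ne') hjn hn₀
    filter_upwards [h1] with n h
    exact Set.eq_empty_iff_forall_notMem.mpr fun j hj => h j hj.1 hj.2
  constructor
  · rintro ⟨k, hkmono, hktend, hkZ⟩
    refine ⟨limsup (fun n => μ n (Set.range k ∩ P n)) atTop, ?_, ?_⟩
    · rw [pos_iff_ne_zero]
      intro h0
      apply hkZ
      show Tendsto (fun n => μ n (Set.range k ∩ P n)) atTop (𝓝 0)
      rw [ENNReal.tendsto_nhds_zero]
      intro ε hε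
      exact (Filter.eventually_lt_of_limsup_lt (h0 ▸ hε)).mono fun n hn => hn.le
    · intro m
      have hTm : ∀ᶠ t in atTop, (y ∘ k) t ∈ U m := hU.tendsto_right_iff.mp hktend m trivial
      obtain ⟨T, hT⟩ := Filter.eventually_atTop.mp hTm
      set F := k '' Set.Iio T with hF
      have hFfin : F.Finite := (Set.finite_Iio T).image k
      have hsub : Set.range k ⊆ V m ∪ F := by
        rintro _ ⟨t, rfl⟩
        rcases le_or_gt T t with h | h
        · exact Or.inl (hT t h)
        · exact Or.inr ⟨t, h, rfl⟩
      calc limsup (fun n => μ n (Set.range k ∩ P n)) atTop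
          ≤ limsup (fun n => μ n (V m ∩ P n) + μ n (F ∩ P n)) atTop := by
            refine Filter.limsup_le_limsup (Filter.Eventually.of_forall fun n => ?_)
            refine le_trans ((hμ n).2.1 ?_) ((hμ n).2.2.1 _ _)
            rw [← Set.union_inter_distrib_right]
            exact Set.inter_subset_inter_left _ hsub
        _ = limsup (fun n => μ n (V m ∩ P n)) atTop := by
            refine Filter.limsup_congr ?_
            filter_upwards [hfin_empty F hFfin] with n hn
            rw [hn, (hμ n).1, add_zero]
  · rintro ⟨q, hq, hqle⟩
    set q' := min q 1 with hq'
    have hq'0 : q' ≠ 0 := (lt_min hq zero_lt_one).ne'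
    have hq'top : q' ≠ ⊤ := ((min_le_right q 1).trans_lt ENNReal.one_lt_top).ne
    have hhalf : q' / 2 < q' := ENNReal.half_lt_self hq'0 hq'top
    have hfreq : ∀ m N, ∃ n, N ≤ n ∧ q' / 2 < μ n (V m ∩ P n) := by
      intro m N
      have hfr : ∃ᶠ n in atTop, q' / 2 < μ n (V m ∩ P n) :=
        Filter.frequently_lt_of_lt_limsup (by isBoundedDefault)
          (lt_of_lt_of_le (hhalf.trans_le ((min_le_left q 1).trans (hqle m))) le_rfl)
      obtain ⟨n, hn1, hn2⟩ := (Filter.frequently_atTop.mp hfr) N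
      exact ⟨n, hn1, hn2⟩
    choose g hg1 hg2 using hfreq
    set f : ℕ → ℕ := fun m => Nat.rec (g 0 0) (fun m ih => g (m+1) (ih+1)) m with hfdef
    have hfsucc : ∀ m, f (m+1) = g (m+1) (f m + 1) := fun m => rfl
    have hfmono : StrictMono f := by
      apply strictMono_nat_of_lt_succ
      intro m
      rw [hfsucc]
      exact lt_of_lt_of_le (Nat.lt_succ_self _) (hg1 (m+1) (f m + 1))
    have hfval : ∀ m, q' / 2 < μ (f m) (V m ∩ P (f m)) := by
      intro m
      cases m with
      | zero => exact hg2 0 0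
      | succ m => rw [hfsucc]; exact hg2 (m+1) (f m + 1)
    set A : Set ℕ := ⋃ m, V m ∩ P (f m) with hA
    have hAsub : ∀ m, V m ∩ P (f m) ⊆ A := fun m => Set.subset_iUnion (fun m => V m ∩ P (f m)) m
    have hAnot : A ∉ Zmu P μ := by
      intro hAZ
      have hAZ' : Tendsto (fun n => μ n (A ∩ P n)) atTop (𝓝 0) := hAZ
      have := (ENNReal.tendsto_nhds_zero.mp hAZ') (q' / 2) (ENNReal.half_pos hq'0)
      obtain ⟨N, hN⟩ := Filter.eventually_atTop.mp this
      have h1 : μ (f N) (V N ∩ P (f N)) ≤ μ (f N) (A ∩ P (f N)) :=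
        (hμ _).2.1 (Set.subset_inter (hAsub N) Set.inter_subset_right)
      exact absurd (hN (f N) hfmono.le_apply) (not_le.mpr (lt_of_lt_of_le (hfval N) h1))
    have hne : ∀ m, (V m ∩ P (f m)).Nonempty := by
      intro m
      rw [Set.nonempty_iff_ne_empty]
      intro he
      have := hfval m
      rw [he, (hμ _).1] at this
      exact absurd this (not_lt.mpr zero_le)
    choose a ha using hne
    have hainj : Function.Injective a := by
      intro m1 m2 h
      by_contra hne12
      have hd : Disjoint (P (f m1)) (P (f m2)) := hPdis (fun hf => hne12 (hfmono.injective hf))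
      exact Set.disjoint_left.mp hd (ha m1).2 (h ▸ (ha m2).2)
    have hAinf : A.Infinite := Set.infinite_of_injective_forall_mem hainj (fun m => hAsub m (ha m))
    have hinf : (setOf fun n => n ∈ A).Infinite := by exact hAinf
    have hbad : ∀ m, (A \ V m).Finite := by
      intro m
      refine Set.Finite.subset (Set.Finite.biUnion (Set.finite_Iio m) (fun m' _ => (hPfin (f m')).1)) ?_
      rintro j ⟨hjA, hjV⟩
      obtain ⟨m', hm'⟩ := Set.mem_iUnion.mp hjA
      have hlt : m' < m := by
        by_contra h
        exact hjV (hUanti (not_lt.mp h) hm'.1)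
      exact Set.mem_biUnion hlt hm'.2
    refine ⟨Nat.nth (· ∈ A), Nat.nth_strictMono hinf, ?_, ?_⟩
    · rw [hU.tendsto_right_iff]
      intro m _
      obtain ⟨N, hN⟩ := (hbad m).bddAbove
      filter_upwards [eventually_ge_atTop (N+1)] with t ht
      have hkA : Nat.nth (· ∈ A) t ∈ A := Nat.nth_mem_of_infinite hinf t
      have hkge : N + 1 ≤ Nat.nth (· ∈ A) t := le_trans ht (Nat.nth_strictMono hinf).le_apply
      by_contra hnot
      have : Nat.nth (· ∈ A) t ∈ A \ V m := ⟨hkA, hnot⟩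
      exact absurd (hN this) (not_le.mpr hkge)
    · have hr : Set.range (Nat.nth (· ∈ A)) = A := by
        rw [Nat.range_nth_of_infinite hinf, Set.setOf_mem_eq]
      rw [hr]
      exact hAnot

end AuxForMain

/-- `ℓ` is a `Z_μ`-limit point of `x↾ω` iff there is `q > 0` with
`limsup_n μ_n({k : (x↾ω)_k ∈ U_m} ∩ I_n) ≥ q` for every `m`. -/
theorem idealLimitPt_iff_Vset {X : Type*} [TopologicalSpace X]
    [FirstCountableTopology X]
    (x : ℕ → X) (P : ℕ → Set ℕ) (μ : ℕ → Set ℕ → ℝ≥0∞)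
    (hP : IsFinPartition P) (hμ : ∀ n, IsSubmeasureOn (μ n))
    (hconc : ∀ n A, μ n A = μ n (A ∩ P n))
    (hlimsup : 0 < Filter.limsup (fun n => μ n (P n)) atTop)
    (l : X) (U : ℕ → Set X) (hU : (𝓝 l).HasBasis (fun _ : ℕ => True) U)
    (hUanti : Antitone U) (ω : ℝ) (hω : ω ∈ Set.Ioc (0:ℝ) 1) :
    IdealLimitPt (Zmu P μ) (subseq x ω) l ↔
      ∃ q : ℝ≥0∞, 0 < q ∧ ∀ m : ℕ,
        q ≤ Filter.limsup (fun n => μ n ({k | subseq x ω k ∈ U m} ∩ P n)) atTop := by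
  exact idealLimitPt_aux (subseq x ω) P μ hP hμ l U hU hUanti
end

section
/- Let x be a sequence in a first countable topological space X and let I be a generalized density ideal. Then for every ordinary limit point ℓ of x, the set {ω ∈ (0,1] : ℓ is an I-limit point of x↾ω} is comeager in (0,1]. -/
open Filter Topology Set MeasureTheory
open scoped ENNReal

lemma aux_sum_range_two_pow (n : ℕ) : ∑ i ∈ Finset.range n, 2^i = 2^n - 1 := by
  induction n with
  | zero => simp
  | succ n ih =>
    rw [Finset.sum_range_succ, ih]
    have h1 : 1 ≤ (2:ℕ)^n := Nat.one_le_two_pow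
    have h2 : (2:ℕ)^(n+1) = 2^n * 2 := pow_succ 2 n
    omega

lemma aux_testBit_sum (c : ℕ) (G : Finset ℕ) :
    ((∑ e ∈ G, 2^e) / 2^c) % 2 = if c ∈ G then 1 else 0 := by
  induction c generalizing G with
  | zero =>
    simp only [pow_zero, Nat.div_one]
    by_cases h : 0 ∈ G
    · rw [← Finset.add_sum_erase _ _ h, pow_zero]
      have hev : 2 ∣ ∑ e ∈ G.erase 0, 2^e := by
        refine Finset.dvd_sum fun e he => ?_
        have : e ≠ 0 := (Finset.mem_erase.1 he).1
        exact dvd_pow_self 2 this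
      simp [h]
      omega
    · have hev : 2 ∣ ∑ e ∈ G, 2^e := by
        refine Finset.dvd_sum fun e he => ?_
        have : e ≠ 0 := by rintro rfl; exact h he
        exact dvd_pow_self 2 this
      simp [h]
      omega
  | succ c ih =>
    set G' := (G.erase 0).image (· - 1) with hG'
    have hinj : Set.InjOn (· - 1) (G.erase 0) := by
      intro a ha b hb hab
      have ha0 : a ≠ 0 := (Finset.mem_erase.1 ha).1
      have hb0 : b ≠ 0 := (Finset.mem_erase.1 hb).1
      simp only at hab
      omega
    have hsum' : ∑ e ∈ G.erase 0, 2^e = 2 * ∑ e ∈ G', 2^e := by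
      rw [hG', Finset.sum_image hinj, Finset.mul_sum]
      refine Finset.sum_congr rfl fun e he => ?_
      have h0 : e ≠ 0 := (Finset.mem_erase.1 he).1
      conv_lhs => rw [show e = (e-1)+1 from by omega]
      rw [pow_succ]
      ring
    have hdec : ∑ e ∈ G, 2^e = (if 0 ∈ G then 1 else 0) + 2 * ∑ e ∈ G', 2^e := by
      by_cases h : 0 ∈ G
      · rw [← Finset.add_sum_erase _ _ h, hsum']; simp [h]
      · rw [if_neg h, ← hsum']
        have : G.erase 0 = G := Finset.erase_eq_of_notMem h
        rw [this]; ring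
    have hdiv2 : (∑ e ∈ G, 2^e) / 2 = ∑ e ∈ G', 2^e := by
      rw [hdec]; rcases ite_eq_or_eq (0 ∈ G) 1 0 with h | h <;> rw [h] <;> omega
    have hmem : (c ∈ G') ↔ (c + 1 ∈ G) := by
      simp only [hG', Finset.mem_image, Finset.mem_erase]
      constructor
      · rintro ⟨a, ⟨ha0, haG⟩, rfl⟩
        have : a - 1 + 1 = a := by omega
        rwa [this]
      · intro h; exact ⟨c + 1, ⟨by omega, h⟩, by omega⟩
    have : (2:ℕ)^(c+1) = 2 * 2^c := by rw [pow_succ]; ring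
    rw [this, ← Nat.div_div_eq_div_mul, hdiv2, ih G', if_congr hmem rfl rfl]

lemma aux_card_filter_Ico (p : ℕ → Prop) [DecidablePred p] (a n : ℕ) :
    ((Finset.Ico a (a + n)).filter p).card = Nat.count (fun k => p (a + k)) n := by
  induction n with
  | zero => simp
  | succ n ih =>
    have h1 : Finset.Ico a (a + (n+1)) = insert (a + n) (Finset.Ico a (a + n)) := by
      ext z; simp [Finset.mem_Ico, Finset.mem_insert]; omega
    rw [h1, Finset.filter_insert, Nat.count_succ]
    by_cases hp : p (a + n)
    · rw [if_pos hp, if_pos hp, Finset.card_insert_of_notMem (by simp), ih]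
    · rw [if_neg hp, if_neg hp, ih]; omega

lemma aux_count_split (p : ℕ → Prop) [DecidablePred p] {a b : ℕ} (h : a ≤ b) :
    Nat.count p b = Nat.count p a + ((Finset.Ico a b).filter p).card := by
  have hb : b = a + (b - a) := by omega
  rw [hb, Nat.count_add, aux_card_filter_Ico p a (b-a)]

lemma aux_ceil_eq {ω : ℝ} {Lc N j : ℕ} (hj : j ≤ Lc)
    (h1 : (N:ℝ)/2^Lc < ω) (h2 : ω ≤ ((N:ℝ)+1)/2^Lc) :
    ⌈(2:ℝ)^j * ω⌉ = (N / 2^(Lc - j) : ℕ) + 1 := by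
  have hsplit : (2:ℝ)^Lc = 2^j * 2^(Lc - j) := by
    rw [← pow_add]; congr 1; omega
  have he : (0:ℝ) < 2^(Lc - j) := by positivity
  have hj2 : (0:ℝ) < (2:ℝ)^j := by positivity
  have hpowL : (0:ℝ) < (2:ℝ)^Lc := by positivity
  set q : ℕ := N / 2^(Lc - j) with hqdef
  have hle : q * 2^(Lc-j) ≤ N := Nat.div_mul_le_self N _
  have hlt : N < (q + 1) * 2^(Lc-j) := by
    have h := Nat.div_add_mod N (2^(Lc-j))
    have hm : N % 2^(Lc-j) < 2^(Lc-j) := Nat.mod_lt _ (Nat.two_pow_pos _)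
    calc N = 2^(Lc-j) * q + N % 2^(Lc-j) := h.symm
    _ < 2^(Lc-j) * q + 2^(Lc-j) := by omega
    _ = (q+1) * 2^(Lc-j) := by ring
  rw [Int.ceil_eq_iff]
  push_cast
  constructor
  · have key1 : (N:ℝ)/2^(Lc-j) < 2^j * ω := by
      rw [div_lt_iff₀ he]
      rw [div_lt_iff₀ hpowL] at h1
      calc (N:ℝ) < ω * 2^Lc := h1
      _ = 2^j * ω * 2^(Lc-j) := by rw [hsplit]; ring
    have key2 : (q:ℝ) ≤ (N:ℝ)/2^(Lc-j) := by
      rw [le_div_iff₀ he]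
      exact_mod_cast hle
    linarith
  · have key3 : (2:ℝ)^j * ω ≤ ((N:ℝ)+1)/2^(Lc-j) := by
      rw [le_div_iff₀ he]
      rw [le_div_iff₀ hpowL] at h2
      calc (2:ℝ)^j * ω * 2^(Lc-j) = ω * 2^Lc := by rw [hsplit]; ring
      _ ≤ (N:ℝ)+1 := h2
    have key4 : ((N:ℝ)+1)/2^(Lc-j) ≤ (q:ℝ) + 1 := by
      rw [div_le_iff₀ he]
      have : ((N:ℕ):ℝ) + 1 ≤ (((q+1) * 2^(Lc-j) : ℕ) : ℝ) := by
        exact_mod_cast hlt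
      push_cast at this
      linarith
    linarith

lemma aux_digit_eq {ω : ℝ} {Lc N : ℕ} (h1 : (N:ℝ)/2^Lc < ω) (h2 : ω ≤ ((N:ℝ)+1)/2^Lc)
    {i : ℕ} (hi : i < Lc) : dyadicDigit ω i = ((N / 2^(Lc - 1 - i)) % 2 : ℕ) := by
  have e1 := aux_ceil_eq (j := i) (by omega) h1 h2
  have e2 := aux_ceil_eq (j := i+1) (by omega) h1 h2
  unfold dyadicDigit
  rw [e1, e2]
  have hs : Lc - (i+1) = Lc - 1 - i := by omega
  rw [hs]
  have hdd : N / 2^(Lc - i) = (N / 2^(Lc - 1 - i)) / 2 := by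
    rw [show Lc - i = (Lc - 1 - i) + 1 by omega, pow_succ, ← Nat.div_div_eq_div_mul]
  rw [hdd]
  push_cast
  omega

lemma aux_digit_zero_or_one (ω : ℝ) (i : ℕ) : dyadicDigit ω i = 0 ∨ dyadicDigit ω i = 1 := by
  unfold dyadicDigit
  have h2t : (2:ℝ)^(i+1) * ω = 2 * ((2:ℝ)^i * ω) := by rw [pow_succ]; ring
  rw [h2t]
  set t := (2:ℝ)^i * ω with ht
  have hu : ⌈2*t⌉ ≤ 2*⌈t⌉ := by
    apply Int.ceil_le.2; push_cast; linarith [Int.le_ceil t]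
  have hl : 2*⌈t⌉ - 1 ≤ ⌈2*t⌉ := by
    rcases Int.even_or_odd ⌈2*t⌉ with ⟨u, hu'⟩ | ⟨u, hu'⟩
    · have h1 : t ≤ (u:ℝ) := by
        have h0 := Int.le_ceil (2*t); rw [hu'] at h0; push_cast at h0; linarith
      have : ⌈t⌉ ≤ u := Int.ceil_le.2 (by exact_mod_cast h1)
      omega
    · have h1 : t ≤ (u:ℝ) + 1 := by
        have h0 := Int.le_ceil (2*t); rw [hu'] at h0; push_cast at h0; linarith
      have : ⌈t⌉ ≤ u + 1 := Int.ceil_le.2 (by push_cast; linarith)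
      omega
  omega

lemma aux_digits_infinite {ω : ℝ} (hω : 0 < ω) : {i | dyadicDigit ω i = 1}.Infinite := by
  have claim : ∀ L : ℕ, ∃ i, L ≤ i ∧ dyadicDigit ω i = 1 := by
    intro L
    by_contra hcon
    push_neg at hcon
    have hzero : ∀ i, L ≤ i → dyadicDigit ω i = 0 := by
      intro i hi
      rcases aux_digit_zero_or_one ω i with h | h
      · exact h
      · exact absurd h (hcon i hi)
    set c : ℤ := ⌈(2:ℝ)^L * ω⌉ with hc
    have hrec : ∀ M : ℕ, ⌈(2:ℝ)^(L+M) * ω⌉ = 2^M * (c - 1) + 1 := by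
      intro M
      induction M with
      | zero => simp [hc]
      | succ M ih =>
        have hd := hzero (L+M) (by omega)
        unfold dyadicDigit at hd
        have : ⌈(2:ℝ)^(L+M+1) * ω⌉ = 2*⌈(2:ℝ)^(L+M) * ω⌉ - 1 := by omega
        rw [show L+(M+1) = L+M+1 by omega, this, ih]
        ring
    have hγpos : (0:ℝ) < (2:ℝ)^L * ω - ((c:ℝ) - 1) := by
      have := Int.ceil_lt_add_one ((2:ℝ)^L * ω)
      rw [← hc] at this
      linarith
    set γ : ℝ := (2:ℝ)^L * ω - ((c:ℝ) - 1) with hγ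
    obtain ⟨M, hM⟩ := pow_unbounded_of_one_lt (1/γ) (by norm_num : (1:ℝ) < 2)
    have hle : (2:ℝ)^(L+M) * ω ≤ ((2^M * (c - 1) + 1 : ℤ) : ℝ) := by
      rw [← hrec M]; exact Int.le_ceil _
    push_cast at hle
    rw [pow_add] at hle
    have h2M : (0:ℝ) < 2^M := by positivity
    have hfin : (2:ℝ)^M * γ ≤ 1 := by nlinarith
    rw [div_lt_iff₀ hγpos] at hM
    nlinarith
  by_contra hfin
  rw [Set.not_infinite] at hfin
  obtain ⟨b, hb⟩ := hfin.bddAbove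
  obtain ⟨i, hi1, hi2⟩ := claim (b+1)
  have := hb hi2
  omega
lemma aux_bit_low {a S c f : ℕ} (hcf : c < f) :
    ((a * 2^f + S) / 2^c) % 2 = (S / 2^c) % 2 := by
  have hf : (2:ℕ)^f = 2^c * 2 * 2^(f-c-1) := by
    conv_lhs => rw [show f = c + 1 + (f - c - 1) by omega]
    rw [pow_add, pow_add, pow_one]
  have h1 : a * 2^f + S = S + 2^c * (2 * (a * 2^(f - c - 1))) := by rw [hf]; ring
  rw [h1, Nat.add_mul_div_left _ _ (Nat.two_pow_pos c), Nat.add_mul_mod_self_left]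

lemma aux_bit_high {a S c f : ℕ} (hfc : f ≤ c) (hS : S < 2^f) :
    ((a * 2^f + S) / 2^c) % 2 = (a / 2^(c - f)) % 2 := by
  have h1 : (a * 2^f + S) / 2^f = a := by
    rw [add_comm, Nat.add_mul_div_right _ _ (Nat.two_pow_pos f), Nat.div_eq_of_lt hS]
    omega
  conv_lhs => rw [show c = f + (c - f) by omega]
  rw [pow_add, ← Nat.div_div_eq_div_mul, h1]


lemma aux_exists_interval {k : ℕ → ℕ} (hk : StrictMono k) (F : Set ℕ) (hF : F.Finite)
    {ω₀ : ℝ} (hω₀ : ω₀ ∈ Set.Ioc (0:ℝ) 1) {L : ℕ} (hL : ∀ j ∈ F, L ≤ j) :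
    ∃ lo hi : ℝ, lo < hi ∧ ∀ y ∈ Set.Ioo lo hi,
      (y ∈ Set.Ioc (0:ℝ) 1 ∧ |y - ω₀| < 1/2^L ∧
        ∀ j ∈ F, Nat.nth (fun i => dyadicDigit y i = 1) j ∈ Set.range k) := by
  classical
  obtain ⟨hω₀pos, hω₀le⟩ := hω₀
  have h2L : (0:ℝ) < 2^L := by positivity
  have hceil_pos : (0:ℤ) < ⌈(2:ℝ)^L * ω₀⌉ := Int.ceil_pos.2 (by positivity)
  set A : ℕ := (⌈(2:ℝ)^L * ω₀⌉).toNat with hA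
  have hA' : ((A:ℕ):ℤ) = ⌈(2:ℝ)^L * ω₀⌉ := by rw [hA]; exact Int.toNat_of_nonneg (le_of_lt hceil_pos)
  have hAcast : (A:ℝ) = ((⌈(2:ℝ)^L * ω₀⌉ : ℤ) : ℝ) := by
    rw [← hA']; push_cast; ring
  have hA1 : 1 ≤ A := by
    have h1 : (1:ℤ) ≤ ((A:ℕ):ℤ) := by rw [hA']; omega
    exact_mod_cast h1
  set N₀ : ℕ := A - 1 with hN₀
  have hN₀A : (N₀:ℝ) + 1 = (A:ℝ) := by
    have : N₀ + 1 = A := by omega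
    exact_mod_cast congrArg (fun n : ℕ => (n:ℝ)) this
  have hup : ω₀ ≤ ((N₀:ℝ)+1)/2^L := by
    rw [le_div_iff₀ h2L, hN₀A, hAcast]
    have := Int.le_ceil ((2:ℝ)^L * ω₀)
    linarith
  have hlow : (N₀:ℝ)/2^L < ω₀ := by
    rw [div_lt_iff₀ h2L]
    have h1 := Int.ceil_lt_add_one ((2:ℝ)^L * ω₀)
    have h2 : (N₀:ℝ) = (A:ℝ) - 1 := by linarith [hN₀A]
    rw [h2, hAcast]
    linarith
  have hA2L : A ≤ 2^L := by
    have h1 : ⌈(2:ℝ)^L * ω₀⌉ ≤ ((2^L : ℕ) : ℤ) := by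
      apply Int.ceil_le.2
      push_cast
      nlinarith
    rw [hA]; omega
  set q : ℕ := Nat.count (fun i => dyadicDigit ω₀ i = 1) L with hq
  have hqL : q ≤ L := by rw [hq]; apply Nat.count_le
  set B : ℕ := L ⊔ (hF.toFinset.sup id) with hB
  have hBF : ∀ j ∈ F, j ≤ B :=
    fun j hj => le_sup_of_le_right (Finset.le_sup (f := id) (hF.mem_toFinset.2 hj))
  have hLB : L ≤ B := le_sup_left
  set M : ℕ := B + 1 - q with hM
  have hM1 : 1 ≤ M := by omega
  set Lc : ℕ := k (L + M) with hLc
  have hLLc : L ≤ Lc := le_trans (by omega) hk.le_apply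
  have h2Lc : (0:ℝ) < 2^Lc := by positivity
  set f : ℕ := Lc - L with hf
  set S : ℕ := ∑ t ∈ Finset.Ico L (L+M), 2^(Lc - 1 - k t) with hS
  have hktLc : ∀ t, t < L + M → k t < Lc := fun t ht => hk ht
  have hktL : ∀ t, L ≤ t → L ≤ k t := fun t ht => le_trans ht hk.le_apply
  have hinj : Set.InjOn (fun t => Lc - 1 - k t) (Finset.Ico L (L+M)) := by
    intro t1 h1 t2 h2 he
    simp only [Finset.coe_Ico, Set.mem_Ico] at h1 h2
    have hk1 : k t1 < Lc := hktLc t1 h1.2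
    have hk2 : k t2 < Lc := hktLc t2 h2.2
    simp only at he
    exact hk.injective (by omega)
  have hSsum : S = ∑ e ∈ (Finset.Ico L (L+M)).image (fun t => Lc - 1 - k t), 2^e :=
    (Finset.sum_image hinj).symm
  have hSlt : S < 2^f := by
    have hsub : (Finset.Ico L (L+M)).image (fun t => Lc - 1 - k t) ⊆ Finset.range f := by
      intro e he
      simp only [Finset.mem_image, Finset.mem_Ico] at he
      obtain ⟨t, ht, rfl⟩ := he
      have h1 : k t < Lc := hktLc t ht.2
      have h2 : L ≤ k t := hktL t ht.1
      simp only [Finset.mem_range, hf]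
      omega
    calc S = ∑ e ∈ (Finset.Ico L (L+M)).image (fun t => Lc - 1 - k t), 2^e := hSsum
    _ ≤ ∑ e ∈ Finset.range f, 2^e := Finset.sum_le_sum_of_subset hsub
    _ = 2^f - 1 := aux_sum_range_two_pow f
    _ < 2^f := by have := Nat.two_pow_pos f; omega
  set N : ℕ := N₀ * 2^f + S with hN
  have hcastLc : (2:ℝ)^Lc = 2^L * 2^f := by
    rw [← pow_add]; congr 1; omega
  refine ⟨(N:ℝ)/2^Lc, ((N:ℝ)+1)/2^Lc, ?_, ?_⟩
  · rw [div_lt_div_iff₀ h2Lc h2Lc]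
    nlinarith
  intro y hy
  obtain ⟨hy1, hy2⟩ := hy
  have hNlow : (N₀:ℝ)/2^L ≤ (N:ℝ)/2^Lc := by
    rw [div_le_div_iff₀ h2L h2Lc, hcastLc]
    have h1 : (N₀ * 2^f : ℕ) ≤ N := by rw [hN]; omega
    have h2 : ((N₀ * 2^f : ℕ):ℝ) ≤ (N:ℝ) := by exact_mod_cast h1
    push_cast at h2 ⊢
    nlinarith
  have hNhigh : ((N:ℝ)+1)/2^Lc ≤ ((N₀:ℝ)+1)/2^L := by
    rw [div_le_div_iff₀ h2Lc h2L, hcastLc]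
    have h1 : N + 1 ≤ (N₀ + 1) * 2^f := by rw [hN]; nlinarith
    have h2 : ((N + 1 : ℕ):ℝ) ≤ (((N₀+1) * 2^f : ℕ):ℝ) := by exact_mod_cast h1
    push_cast at h2 ⊢
    nlinarith
  have hyL_low : (N₀:ℝ)/2^L < y := lt_of_le_of_lt hNlow hy1
  have hyL_high : y ≤ ((N₀:ℝ)+1)/2^L := le_trans (le_of_lt hy2) hNhigh
  have hconst : ((N₀:ℝ)+1)/2^L - (N₀:ℝ)/2^L = 1/2^L := by ring
  refine ⟨⟨?_, ?_⟩, ?_, ?_⟩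
  · have : (0:ℝ) ≤ (N₀:ℝ)/2^L := by positivity
    linarith
  · have h1 : ((N₀:ℝ)+1) ≤ 2^L := by
      rw [hN₀A]
      exact_mod_cast hA2L
    have h2 : ((N₀:ℝ)+1)/2^L ≤ 1 := by
      rw [div_le_one h2L]; exact h1
    linarith
  · rw [abs_lt]; constructor <;> linarith
  -- digit analysis
  have hy2' : y ≤ ((N:ℝ)+1)/2^Lc := le_of_lt hy2
  have hdigy : ∀ i, i < Lc → dyadicDigit y i = ((N / 2^(Lc-1-i)) % 2 : ℕ) :=
    fun i hi => aux_digit_eq hy1 hy2' hi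
  have hdig_low : ∀ i, i < L → dyadicDigit y i = dyadicDigit ω₀ i := by
    intro i hi
    rw [hdigy i (lt_of_lt_of_le hi hLLc), hN]
    rw [aux_bit_high (by omega : f ≤ Lc - 1 - i) hSlt]
    rw [aux_digit_eq hlow hup hi]
    have he : Lc - 1 - i - f = L - 1 - i := by omega
    rw [he]
  have hchar : ∀ i, L ≤ i → i < Lc →
      (dyadicDigit y i = 1 ↔ ∃ t, (L ≤ t ∧ t < L + M) ∧ k t = i) := by
    intro i hiL hiLc
    rw [hdigy i hiLc, hN, aux_bit_low (by omega : Lc - 1 - i < f), hSsum,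
      aux_testBit_sum]
    by_cases hmem : Lc - 1 - i ∈ (Finset.Ico L (L+M)).image (fun t => Lc - 1 - k t)
    · rw [if_pos hmem]
      simp only [Finset.mem_image, Finset.mem_Ico] at hmem
      obtain ⟨t, ht, he⟩ := hmem
      have h1 : k t < Lc := hktLc t ht.2
      have h2 : k t = i := by omega
      exact iff_of_true (by norm_num) ⟨t, ht, h2⟩
    · rw [if_neg hmem]
      refine iff_of_false (by norm_num) ?_
      rintro ⟨t, ht, rfl⟩
      exact absurd (Finset.mem_image.2 ⟨t, Finset.mem_Ico.2 ht, rfl⟩) hmem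
  have hcount : Nat.count (fun i => dyadicDigit y i = 1) L = q := by
    rw [hq, Nat.count_eq_card_filter_range, Nat.count_eq_card_filter_range]
    congr 1
    apply Finset.filter_congr
    intro i hi
    rw [hdig_low i (Finset.mem_range.1 hi)]
  intro j hjF
  have hjL : L ≤ j := hL j hjF
  have hjB : j ≤ B := hBF j hjF
  have hqj : q ≤ j := le_trans hqL hjL
  have hsM : j - q < M := by omega
  set t₀ : ℕ := L + (j - q) with ht₀
  have ht₀M : t₀ < L + M := by omega
  have hkt₀Lc : k t₀ < Lc := hktLc t₀ ht₀M
  have hkt₀L : L ≤ k t₀ := hktL t₀ (by omega)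
  have hpredkt : dyadicDigit y (k t₀) = 1 :=
    (hchar (k t₀) hkt₀L hkt₀Lc).2 ⟨t₀, ⟨by omega, ht₀M⟩, rfl⟩
  have hfilter : (Finset.Ico L (k t₀)).filter (fun i => dyadicDigit y i = 1)
      = (Finset.Ico L t₀).image k := by
    ext i
    simp only [Finset.mem_filter, Finset.mem_Ico, Finset.mem_image]
    constructor
    · rintro ⟨⟨hiL, hik⟩, hpred⟩
      have hiLc : i < Lc := lt_trans hik hkt₀Lc
      obtain ⟨t, ht, rfl⟩ := (hchar i hiL hiLc).1 hpred
      exact ⟨t, ⟨ht.1, hk.lt_iff_lt.1 hik⟩, rfl⟩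
    · rintro ⟨t, ⟨htL, htt₀⟩, rfl⟩
      have h1 : k t < k t₀ := hk htt₀
      refine ⟨⟨hktL t htL, h1⟩, ?_⟩
      exact (hchar (k t) (hktL t htL) (lt_trans h1 hkt₀Lc)).2 ⟨t, ⟨htL, by omega⟩, rfl⟩
  have hcount2 : Nat.count (fun i => dyadicDigit y i = 1) (k t₀) = j := by
    rw [aux_count_split _ hkt₀L, hcount, hfilter,
      Finset.card_image_of_injective _ hk.injective, Nat.card_Ico]
    omega
  have := Nat.nth_count (p := fun i => dyadicDigit y i = 1) hpredkt
  rw [hcount2] at this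
  rw [this]
  exact ⟨t₀, rfl⟩

/-- For a generalized density ideal `I`, the set of `ω` such that `ℓ` is an
`I`-limit point of `x↾ω` is comeager, for every ordinary limit point `ℓ`. -/
theorem limitPt_subseq_comeager {X : Type*} [TopologicalSpace X]
    [FirstCountableTopology X]
    (x : ℕ → X) (I : Set (Set ℕ)) (hI : IsGenDensityIdeal I)
    (l : X) (hl : l ∈ limitPts x) :
    IsMeagre {ω : Set.Ioc (0:ℝ) 1 | ¬ IdealLimitPt I (subseq x ↑ω) l} := by
  classical
  obtain ⟨P, μ, hpart, hsub, hconc, hlimsup, hIeq⟩ := hI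
  obtain ⟨k, hk, hkx⟩ := hl
  have hpos : 0 < Filter.limsup (fun n => μ n (P n)) atTop := pos_iff_ne_zero.2 hlimsup
  obtain ⟨ε, hε0, hεlt⟩ := exists_between hpos
  have hmono : ∀ n : ℕ, ∀ ⦃A B : Set ℕ⦄, A ⊆ B → μ n A ≤ μ n B := fun n => (hsub n).2.1
  have hfreq : ∀ a : ℕ, ∃ n, a ≤ n ∧ ε < μ n (P n) := by
    have hF : ∃ᶠ n in atTop, ε < μ n (P n) :=
      Filter.frequently_lt_of_lt_limsup (by isBoundedDefault) hεlt
    intro a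
    obtain ⟨n, hn1, hn2⟩ := (Filter.frequently_atTop.1 hF) a
    exact ⟨n, hn1, hn2⟩
  have hblocks : ∀ m L : ℕ, ∃ n, m ≤ n ∧ ε < μ n (P n) ∧ ∀ j ∈ P n, L ≤ j := by
    intro m L
    have hfin : {n | ∃ j ∈ P n, j < L}.Finite := by
      set c : ℕ → ℕ := fun n => if h : ∃ j ∈ P n, j < L then h.choose else 0 with hc
      have hcs : ∀ n, (∃ j ∈ P n, j < L) → c n ∈ P n ∧ c n < L := by
        intro n h
        simp only [hc, dif_pos h]
        exact ⟨h.choose_spec.1, h.choose_spec.2⟩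
      apply Set.Finite.of_finite_image (f := c)
      · apply Set.Finite.subset (Set.finite_Iio L)
        rintro _ ⟨n, hn, rfl⟩
        exact (hcs n hn).2
      · intro n1 h1 n2 h2 hcc
        by_contra hne
        exact (Set.disjoint_left.1 (hpart.2.2 hne) (hcs n1 h1).1) (hcc ▸ (hcs n2 h2).1)
    obtain ⟨b, hb⟩ := hfin.bddAbove
    obtain ⟨n, hn1, hn2⟩ := hfreq (max m (b+1))
    refine ⟨n, le_trans (le_max_left _ _) hn1, hn2, ?_⟩
    intro j hj
    by_contra hjL
    push_neg at hjL
    have h1 : n ∈ {n | ∃ j ∈ P n, j < L} := ⟨j, hj, hjL⟩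
    have h2 := hb h1
    have h3 := le_trans (le_max_right m (b+1)) hn1
    omega
  set Wgood : ℕ → Set ℝ :=
    fun n => {ω : ℝ | ∀ j ∈ P n, Nat.nth (fun i => dyadicDigit ω i = 1) j ∈ Set.range k}
    with hWgood
  set W : ℕ → Set ℝ :=
    fun m => ⋃ n ∈ {n : ℕ | m ≤ n ∧ ε < μ n (P n)}, interior (Wgood n) with hW
  have hWopen : ∀ m, IsOpen (W m) := fun m => isOpen_biUnion (fun n _ => isOpen_interior)
  set V : ℕ → Set (Set.Ioc (0:ℝ) 1) :=
    fun m => (fun ω : Set.Ioc (0:ℝ) 1 => (ω : ℝ)) ⁻¹' W m with hV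
  have hVopen : ∀ m, IsOpen (V m) := fun m => (hWopen m).preimage continuous_subtype_val
  have hVdense : ∀ m, Dense (V m) := by
    intro m
    rw [dense_iff_inter_open]
    rintro U hU ⟨ω₀, hω₀U⟩
    obtain ⟨J, hJopen, hJeq⟩ := isOpen_induced_iff.1 hU
    have hω₀J : (ω₀ : ℝ) ∈ J := by
      rw [← hJeq] at hω₀U
      exact hω₀U
    obtain ⟨δ, hδ0, hδJ⟩ := Metric.isOpen_iff.1 hJopen _ hω₀J
    obtain ⟨L, hLδ⟩ := exists_pow_lt_of_lt_one hδ0 (by norm_num : (1:ℝ)/2 < 1)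
    obtain ⟨n, hnm, hnε, hnL⟩ := hblocks m L
    obtain ⟨lo, hi, hlohi, hprops⟩ :=
      aux_exists_interval hk (P n) (hpart.1 n).1 ω₀.2 hnL
    set y : ℝ := (lo + hi)/2 with hy0
    have hy : y ∈ Set.Ioo lo hi := ⟨by simp only [hy0]; linarith, by simp only [hy0]; linarith⟩
    obtain ⟨hyIoc, hyd, hynth⟩ := hprops y hy
    refine ⟨⟨y, hyIoc⟩, ?_, ?_⟩
    · rw [← hJeq]
      apply Set.mem_preimage.2
      apply hδJ
      rw [Metric.mem_ball, Real.dist_eq]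
      have hpow : (1:ℝ)/2^L = (1/2)^L := by
        rw [div_pow]
        norm_num
      rw [hpow] at hyd
      linarith
    · show y ∈ W m
      apply Set.mem_biUnion (show n ∈ {n : ℕ | m ≤ n ∧ ε < μ n (P n)} from ⟨hnm, hnε⟩)
      have hWsub : Set.Ioo lo hi ⊆ Wgood n := fun z hz => (hprops z hz).2.2
      exact (interior_maximal hWsub isOpen_Ioo) hy
  have hGres : (⋂ m, V m) ∈ residual (Set.Ioc (0:ℝ) 1) :=
    countable_iInter_mem.2 fun m => residual_of_dense_open (hVopen m) (hVdense m)
  show _ᶜ ∈ residual _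
  apply Filter.mem_of_superset hGres
  intro ω hωG
  simp only [Set.mem_compl_iff, Set.mem_setOf_eq, not_not]
  have H : ∀ m : ℕ, ∃ n, m ≤ n ∧ ε < μ n (P n) ∧
      ∀ j ∈ P n, Nat.nth (fun i => dyadicDigit (↑ω : ℝ) i = 1) j ∈ Set.range k := by
    intro m
    have h1 : (↑ω : ℝ) ∈ W m := Set.mem_iInter.1 hωG m
    obtain ⟨n, hn, hmem⟩ := Set.mem_iUnion₂.1 h1
    exact ⟨n, hn.1, hn.2, interior_subset hmem⟩
  set E : Set ℕ :=
    {j | Nat.nth (fun i => dyadicDigit (↑ω : ℝ) i = 1) j ∈ Set.range k} with hE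
  have hQ : ∀ m, ∃ n, m ≤ n ∧ (ε < μ n (P n) ∧ P n ⊆ E) := by
    intro m
    obtain ⟨n, h1, h2, h3⟩ := H m
    exact ⟨n, h1, h2, fun j hj => h3 j hj⟩
  have hQinf : {n | ε < μ n (P n) ∧ P n ⊆ E}.Infinite := by
    by_contra hfin
    rw [Set.not_infinite] at hfin
    obtain ⟨b, hb⟩ := hfin.bddAbove
    obtain ⟨n, hn1, hn2⟩ := hQ (b+1)
    have := hb hn2
    omega
  have hEinf : E.Infinite := by
    by_contra hfin
    rw [Set.not_infinite] at hfin
    set c : ℕ → ℕ := fun n => if h : (P n).Nonempty then h.choose else 0 with hc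
    have hcP : ∀ n, c n ∈ P n := by
      intro n
      have h := (hpart.1 n).2
      simp only [hc, dif_pos h]
      exact h.choose_spec
    have hinj : Set.InjOn c {n | ε < μ n (P n) ∧ P n ⊆ E} := by
      intro n1 _ n2 _ hcc
      by_contra hne
      exact (Set.disjoint_left.1 (hpart.2.2 hne) (hcP n1)) (hcc ▸ hcP n2)
    have himg : c '' {n | ε < μ n (P n) ∧ P n ⊆ E} ⊆ E := by
      rintro _ ⟨n, hn, rfl⟩
      exact hn.2 (hcP n)
    exact hQinf (Set.Finite.of_finite_image (hfin.subset himg) hinj)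
  have hEinf' : (setOf fun j => j ∈ E).Infinite := hEinf
  have hDinf : (setOf fun i => dyadicDigit (↑ω : ℝ) i = 1).Infinite :=
    aux_digits_infinite ω.2.1
  set k' : ℕ → ℕ := Nat.nth (fun j => j ∈ E) with hk'
  have hk'sm : StrictMono k' := Nat.nth_strictMono hEinf'
  have hk'mem : ∀ t, k' t ∈ E := fun t => Nat.nth_mem_of_infinite hEinf' t
  set g : ℕ → ℕ := fun t => Nat.nth (fun i => dyadicDigit (↑ω : ℝ) i = 1) (k' t) with hg
  have hgrange : ∀ t, g t ∈ Set.range k := fun t => hk'mem t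
  choose r hr using hgrange
  have hgsm : StrictMono g := (Nat.nth_strictMono hDinf).comp hk'sm
  have hrt : Tendsto r atTop atTop := by
    rw [tendsto_atTop_atTop]
    intro b
    refine ⟨k b, fun t ht => ?_⟩
    have h1 : k b ≤ g t := le_trans ht hgsm.le_apply
    rw [← hr t] at h1
    exact hk.le_iff_le.1 h1
  refine ⟨k', hk'sm, ?_, ?_⟩
  · have heq : (subseq x ↑ω) ∘ k' = (x ∘ k) ∘ r := by
      funext t
      simp only [Function.comp_apply, subseq]
      rw [hr t]
    rw [heq]
    exact hkx.comp hrt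
  · have hrange : Set.range k' = E := by
      rw [hk', Nat.range_nth_of_infinite hEinf']
      exact Set.setOf_mem_eq
    rw [hrange, hIeq]
    intro hEZ
    have hev : ∀ᶠ n in atTop, μ n (E ∩ P n) < ε := by
      have := hEZ (Iio_mem_nhds hε0)
      simpa using this
    obtain ⟨a, ha⟩ := Filter.eventually_atTop.1 hev
    obtain ⟨n, hn1, hn2, hn3⟩ := hQ a
    have h1 : μ n (P n) ≤ μ n (E ∩ P n) := hmono n (fun j hj => ⟨hn3 hj, hj⟩)
    have h2 := ha n hn1
    exact absurd (lt_of_lt_of_le hn2 h1) (not_lt.2 (le_of_lt h2))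
end
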